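/- arXiv:2402.10335 — 2 statements merged into one kernel-verified Lean document; each statement's English description precedes it below -/
import Mathlib

section
/- Let G be an (incomplete) correlation graph. If G can be clustered by a sequence of k operations, each of which is either the recoloring of a single edge (changing its color between blue and red) or a permissive vertex split, then G can be clustered by a sequence of k operations all of which are permissive vertex splits. -/
structure ICG where
  verts : Finset ℕ
  blue : Finset (Sym2 ℕ)
  red : Finset (Sym2 ℕ)
  blue_mem : ∀ e ∈ blue, ∀ x ∈ e, x ∈ verts
  red_mem : ∀ e ∈ red, ∀ x ∈ e, x ∈ verts
  blue_nd : ∀ e ∈ blue, ¬ e.IsDiag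
  red_nd : ∀ e ∈ red, ¬ e.IsDiag
  disj : Disjoint blue red

def PermSplit (G G' : ICG) : Prop :=
  ∃ v v1 v2 : ℕ, v ∈ G.verts ∧ v1 ∉ G.verts ∧ v2 ∉ G.verts ∧ v1 ≠ v2 ∧
    G'.verts = insert v1 (insert v2 (G.verts.erase v)) ∧
    (∀ u w : ℕ, u ≠ v → w ≠ v → u ≠ v1 → u ≠ v2 → w ≠ v1 → w ≠ v2 →
      ((s(u,w) ∈ G.blue ↔ s(u,w) ∈ G'.blue) ∧ (s(u,w) ∈ G.red ↔ s(u,w) ∈ G'.red))) ∧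
    (∀ u : ℕ, s(u,v) ∈ G.blue → s(u,v1) ∈ G'.blue ∨ s(u,v2) ∈ G'.blue) ∧
    (∀ u : ℕ, s(u,v) ∈ G.red → s(u,v1) ∈ G'.red ∨ s(u,v2) ∈ G'.red)

def HasErrCycle (G : ICG) : Prop :=
  ∃ (l : List ℕ) (u v : ℕ), l.Nodup ∧ l.Chain' (fun a b => s(a,b) ∈ G.blue) ∧
    l.head? = some u ∧ l.getLast? = some v ∧ s(u,v) ∈ G.red

def Splits (n : ℕ) (G G' : ICG) : Prop :=
  ∃ f : ℕ → ICG, f 0 = G ∧ f n = G' ∧ ∀ i < n, PermSplit (f i) (f (i+1))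

def Recolor (G G' : ICG) : Prop :=
  G'.verts = G.verts ∧
  ∃ e : Sym2 ℕ,
    (e ∈ G.blue ∧ G'.blue = G.blue.erase e ∧ G'.red = insert e G.red) ∨
    (e ∈ G.red ∧ G'.red = G.red.erase e ∧ G'.blue = insert e G.blue)

def MixedSeq (n : ℕ) (G G' : ICG) : Prop :=
  ∃ f : ℕ → ICG, f 0 = G ∧ f n = G' ∧
    ∀ i < n, Recolor (f i) (f (i+1)) ∨ PermSplit (f i) (f (i+1))


/-- rename function on edges: replace `a` by `r c` where `c` is the other endpoint -/
def ren (a : ℕ) (r : ℕ → ℕ) : Sym2 ℕ → Sym2 ℕ :=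
  Sym2.lift ⟨fun x y => if x = a then s(r y, y) else if y = a then s(x, r x) else s(x, y), by
    intro x y
    by_cases hx : x = a <;> by_cases hy : y = a <;> simp [hx, hy, Sym2.eq_swap]⟩

lemma ren_eq (a : ℕ) (r : ℕ → ℕ) (x y : ℕ) :
    ren a r s(x, y) = if x = a then s(r y, y) else if y = a then s(x, r x) else s(x, y) :=
  rfl

lemma ren_not_mem (a : ℕ) (r : ℕ → ℕ) (e : Sym2 ℕ) (h : a ∉ e) : ren a r e = e := by
  induction e using Sym2.ind with
  | _ x y =>
    simp only [Sym2.mem_iff, not_or] at h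
    rw [ren_eq]
    have h1 : x ≠ a := fun hh => h.1 hh.symm
    have h2 : y ≠ a := fun hh => h.2 hh.symm
    simp [h1, h2]

lemma ren_pair (a : ℕ) (r : ℕ → ℕ) (c : ℕ) (hc : c ≠ a) :
    ren a r s(c, a) = s(c, r c) := by
  rw [ren_eq]; simp [hc]

section Split

variable (H : ICG) (a a1 a2 : ℕ) (rB rR : ℕ → ℕ)
variable (hrB : ∀ c, rB c = a1 ∨ rB c = a2) (hrR : ∀ c, rR c = a1 ∨ rR c = a2)
variable (h1 : a1 ∉ H.verts) (h2 : a2 ∉ H.verts)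

/-- membership lemma skeleton: image edges not containing a -/
lemma ren_image_elim {S : Finset (Sym2 ℕ)} (hS : S ⊆ H.blue ∪ H.red) (r : ℕ → ℕ)
    (hr : ∀ c, r c = a1 ∨ r c = a2) {e' : Sym2 ℕ} (he' : e' ∈ S.image (ren a r)) :
    (e' ∈ S ∧ a ∉ e') ∨ (∃ c, c ≠ a ∧ c ∈ H.verts ∧ s(c, a) ∈ S ∧ e' = s(c, r c)) := by
  rcases Finset.mem_image.mp he' with ⟨e, he, rfl⟩
  by_cases ha : a ∈ e
  · right
    rcases Sym2.mem_iff_exists.mp ha with ⟨c, rfl⟩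
    have hnd : ¬ (s(a, c)).IsDiag := by
      rcases Finset.mem_union.mp (hS he) with h | h
      · exact H.blue_nd _ h
      · exact H.red_nd _ h
    have hca : c ≠ a := by simpa [Sym2.isDiag_iff_proj_eq, eq_comm] using hnd
    have hcv : c ∈ H.verts := by
      rcases Finset.mem_union.mp (hS he) with h | h
      · exact H.blue_mem _ h c (by simp)
      · exact H.red_mem _ h c (by simp)
    refine ⟨c, hca, hcv, by rwa [Sym2.eq_swap] at he, ?_⟩
    rw [Sym2.eq_swap, ren_pair a r c hca]
  · left
    rw [ren_not_mem a r e ha]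
    exact ⟨he, ha⟩

noncomputable def splitICG : ICG where
  verts := insert a1 (insert a2 (H.verts.erase a))
  blue := H.blue.image (ren a rB)
  red := H.red.image (ren a rR)
  blue_mem := by
    intro e' he' x hx
    rcases ren_image_elim H a a1 a2 Finset.subset_union_left rB hrB he' with
      ⟨he, ha⟩ | ⟨c, hca, hcv, _, rfl⟩
    · have hxv := H.blue_mem _ he x hx
      have hxa : x ≠ a := fun hh => ha (hh ▸ hx)
      simp [Finset.mem_insert, Finset.mem_erase, hxa, hxv]
    · rcases Sym2.mem_iff.mp hx with rfl | rfl
      · simp [Finset.mem_insert, Finset.mem_erase, hca, hcv]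
      · rcases hrB c with h | h <;> simp [h]
  red_mem := by
    intro e' he' x hx
    rcases ren_image_elim H a a1 a2 Finset.subset_union_right rR hrR he' with
      ⟨he, ha⟩ | ⟨c, hca, hcv, _, rfl⟩
    · have hxv := H.red_mem _ he x hx
      have hxa : x ≠ a := fun hh => ha (hh ▸ hx)
      simp [Finset.mem_insert, Finset.mem_erase, hxa, hxv]
    · rcases Sym2.mem_iff.mp hx with rfl | rfl
      · simp [Finset.mem_insert, Finset.mem_erase, hca, hcv]
      · rcases hrR c with h | h <;> simp [h]
  blue_nd := by
    intro e' he'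
    rcases ren_image_elim H a a1 a2 Finset.subset_union_left rB hrB he' with
      ⟨he, _⟩ | ⟨c, hca, hcv, _, rfl⟩
    · exact H.blue_nd _ he
    · have : rB c ≠ c := by
        rcases hrB c with h | h <;> rw [h] <;> rintro rfl <;> [exact h1 hcv; exact h2 hcv]
      simp [Sym2.isDiag_iff_proj_eq]
      exact fun hh => this hh.symm
  red_nd := by
    intro e' he'
    rcases ren_image_elim H a a1 a2 Finset.subset_union_right rR hrR he' with
      ⟨he, _⟩ | ⟨c, hca, hcv, _, rfl⟩
    · exact H.red_nd _ he
    · have : rR c ≠ c := by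
        rcases hrR c with h | h <;> rw [h] <;> rintro rfl <;> [exact h1 hcv; exact h2 hcv]
      simp [Sym2.isDiag_iff_proj_eq]
      exact fun hh => this hh.symm
  disj := by
    rw [Finset.disjoint_left]
    intro e' hb hr
    rcases ren_image_elim H a a1 a2 Finset.subset_union_left rB hrB hb with
      ⟨heb, hab⟩ | ⟨c, hca, hcv, hec, rfl⟩
    · rcases ren_image_elim H a a1 a2 Finset.subset_union_right rR hrR hr with
        ⟨her, _⟩ | ⟨d, hda, hdv, hed, heq⟩
      · exact Finset.disjoint_left.mp H.disj heb her
      · have : rR d ∈ e' := by rw [heq]; simp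
        have := H.blue_mem _ heb _ this
        rcases hrR d with h | h <;> rw [h] at this <;> [exact h1 this; exact h2 this]
    · rcases ren_image_elim H a a1 a2 Finset.subset_union_right rR hrR hr with
        ⟨her, har⟩ | ⟨d, hda, hdv, hed, heq⟩
      · have : rB c ∈ s(c, rB c) := by simp
        have := H.red_mem _ her _ this
        rcases hrB c with h | h <;> rw [h] at this <;> [exact h1 this; exact h2 this]
      · rw [Sym2.eq_iff] at heq
        rcases heq with ⟨rfl, _⟩ | ⟨hc, _⟩
        · exact Finset.disjoint_left.mp H.disj hec hed
        · rcases hrR d with h | h <;> rw [h] at hc <;> [exact h1 (hc ▸ hcv); exact h2 (hc ▸ hcv)]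

lemma mem_away {S : Finset (Sym2 ℕ)} (hS : S ⊆ H.blue ∪ H.red) (r : ℕ → ℕ)
    (hr : ∀ c, r c = a1 ∨ r c = a2) (u w : ℕ) (hu : u ≠ a) (hw : w ≠ a)
    (hu1 : u ≠ a1) (hu2 : u ≠ a2) (hw1 : w ≠ a1) (hw2 : w ≠ a2) :
    s(u, w) ∈ S.image (ren a r) ↔ s(u, w) ∈ S := by
  constructor
  · intro he'
    rcases ren_image_elim H a a1 a2 hS r hr he' with ⟨he, _⟩ | ⟨c, hca, hcv, hec, heq⟩
    · exact he
    · exfalso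
      have : r c ∈ s(u, w) := by rw [heq]; simp
      rcases Sym2.mem_iff.mp this with h | h <;> rcases hr c with h' | h' <;>
        simp_all
  · intro he
    have ha : a ∉ s(u, w) := by
      simp only [Sym2.mem_iff, not_or]
      exact ⟨Ne.symm hu, Ne.symm hw⟩
    rw [← ren_not_mem a r _ ha]
    exact Finset.mem_image_of_mem _ he

include h1 h2 in
lemma mem_copy {S : Finset (Sym2 ℕ)} (hS : S ⊆ H.blue ∪ H.red) (r : ℕ → ℕ)
    (hr : ∀ c, r c = a1 ∨ r c = a2) (c x : ℕ) (hx : x = a1 ∨ x = a2)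
    (hc1 : c ≠ a1) (hc2 : c ≠ a2) :
    s(c, x) ∈ S.image (ren a r) ↔ (s(c, a) ∈ S ∧ r c = x) := by
  have hxv : x ∉ H.verts := by rcases hx with h | h <;> rw [h] <;> assumption
  constructor
  · intro he'
    rcases ren_image_elim H a a1 a2 hS r hr he' with ⟨he, _⟩ | ⟨d, hda, hdv, hed, heq⟩
    · exfalso
      have hxm : x ∈ s(c, x) := by simp
      rcases Finset.mem_union.mp (hS he) with h | h
      · exact hxv (H.blue_mem _ h x hxm)
      · exact hxv (H.red_mem _ h x hxm)
    · rw [Sym2.eq_iff] at heq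
      rcases heq with ⟨rfl, h2'⟩ | ⟨h1', h2'⟩
      · exact ⟨hed, h2'.symm⟩
      · exfalso
        rcases hr d with h | h <;> rw [h] at h1' <;> simp_all
  · rintro ⟨he, hrc⟩
    have hca : c ≠ a := by
      have hnd : ¬ (s(c, a)).IsDiag := by
        rcases Finset.mem_union.mp (hS he) with h | h
        · exact H.blue_nd _ h
        · exact H.red_nd _ h
      simpa [Sym2.isDiag_iff_proj_eq] using hnd
    have := Finset.mem_image_of_mem (ren a r) he
    rwa [ren_pair a r c hca, hrc] at this

lemma a_not_mem {S : Finset (Sym2 ℕ)} (hS : S ⊆ H.blue ∪ H.red) (r : ℕ → ℕ)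
    (hr : ∀ c, r c = a1 ∨ r c = a2) (ha1 : a ≠ a1) (ha2 : a ≠ a2) {e' : Sym2 ℕ}
    (he' : e' ∈ S.image (ren a r)) : a ∉ e' := by
  rcases ren_image_elim H a a1 a2 hS r hr he' with ⟨_, ha⟩ | ⟨c, hca, hcv, _, rfl⟩
  · exact ha
  · simp only [Sym2.mem_iff, not_or]
    refine ⟨Ne.symm hca, ?_⟩
    rcases hr c with h | h <;> rw [h] <;> [exact ha1; exact ha2]

include h1 h2 in
lemma no_copy_edge {S : Finset (Sym2 ℕ)} (hS : S ⊆ H.blue ∪ H.red) (r : ℕ → ℕ)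
    (hr : ∀ c, r c = a1 ∨ r c = a2) : s(a1, a2) ∉ S.image (ren a r) := by
  intro he'
  rcases ren_image_elim H a a1 a2 hS r hr he' with ⟨he, _⟩ | ⟨c, hca, hcv, _, heq⟩
  · have : a1 ∈ s(a1, a2) := by simp
    rcases Finset.mem_union.mp (hS he) with h | h
    · exact h1 (H.blue_mem _ h a1 this)
    · exact h1 (H.red_mem _ h a1 this)
  · have : c ∈ s(a1, a2) := by rw [heq]; simp
    rcases Sym2.mem_iff.mp this with rfl | rfl <;> [exact h1 hcv; exact h2 hcv]

end Split

def Good (G : ICG) (b : ℕ) : Prop :=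
  ∃ e1 ∈ G.blue ∪ G.red, ∃ e2 ∈ G.blue ∪ G.red, e1 ≠ e2 ∧ b ∈ e1 ∧ b ∈ e2

def RelF (φ : ℕ → ℕ) (H H'' : ICG) : Prop :=
  (H.verts.Nonempty → H''.verts.Nonempty) ∧
  (∀ b, Good H'' b → φ b ∈ H.verts) ∧
  (Set.InjOn φ {b | Good H'' b}) ∧
  (∀ b c, Good H'' b → Good H'' c → s(b, c) ∈ H''.blue → s(φ b, φ c) ∈ H.blue) ∧
  (∀ b c, Good H'' b → Good H'' c → s(b, c) ∈ H''.red → s(φ b, φ c) ∈ H.red)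

section Split2

variable {H : ICG} {a a1 a2 : ℕ} {rB rR : ℕ → ℕ}
variable (hrB : ∀ c, rB c = a1 ∨ rB c = a2) (hrR : ∀ c, rR c = a1 ∨ rR c = a2)
variable (h1 : a1 ∉ H.verts) (h2 : a2 ∉ H.verts)

lemma pre_at {b : ℕ} {e' : Sym2 ℕ} (hb : b ∈ e') (hb1 : b ≠ a1) (hb2 : b ≠ a2)
    (he' : e' ∈ (splitICG H a a1 a2 rB rR hrB hrR h1 h2).blue ∪
      (splitICG H a a1 a2 rB rR hrB hrR h1 h2).red) :
    ∃ e, b ∈ e ∧ ((e ∈ H.blue ∧ ren a rB e = e') ∨ (e ∈ H.red ∧ ren a rR e = e')) := by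
  rcases Finset.mem_union.mp he' with h | h
  · rcases ren_image_elim H a a1 a2 Finset.subset_union_left rB hrB h with
      ⟨he, ha⟩ | ⟨c, hca, hcv, hec, heq⟩
    · exact ⟨e', hb, Or.inl ⟨he, ren_not_mem a rB e' ha⟩⟩
    · have hbc : b = c := by
        rw [heq] at hb
        rcases Sym2.mem_iff.mp hb with h' | h'
        · exact h'
        · exfalso; rcases hrB c with h'' | h'' <;> rw [h''] at h' <;> simp_all
      subst hbc
      exact ⟨s(b, a), by simp, Or.inl ⟨hec, by rw [ren_pair a rB b hca, heq]⟩⟩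
  · rcases ren_image_elim H a a1 a2 Finset.subset_union_right rR hrR h with
      ⟨he, ha⟩ | ⟨c, hca, hcv, hec, heq⟩
    · exact ⟨e', hb, Or.inr ⟨he, ren_not_mem a rR e' ha⟩⟩
    · have hbc : b = c := by
        rw [heq] at hb
        rcases Sym2.mem_iff.mp hb with h' | h'
        · exact h'
        · exfalso; rcases hrR c with h'' | h'' <;> rw [h''] at h' <;> simp_all
      subst hbc
      exact ⟨s(b, a), by simp, Or.inr ⟨hec, by rw [ren_pair a rR b hca, heq]⟩⟩

lemma pre_at_copy {x : ℕ} {e' : Sym2 ℕ} (hx : x = a1 ∨ x = a2) (hb : x ∈ e')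
    (he' : e' ∈ (splitICG H a a1 a2 rB rR hrB hrR h1 h2).blue ∪
      (splitICG H a a1 a2 rB rR hrB hrR h1 h2).red) :
    ∃ e, a ∈ e ∧ ((e ∈ H.blue ∧ ren a rB e = e') ∨ (e ∈ H.red ∧ ren a rR e = e')) := by
  have hxv : x ∉ H.verts := by rcases hx with h | h <;> rw [h] <;> assumption
  rcases Finset.mem_union.mp he' with h | h
  · rcases ren_image_elim H a a1 a2 Finset.subset_union_left rB hrB h with
      ⟨he, ha⟩ | ⟨c, hca, hcv, hec, heq⟩
    · exact absurd (H.blue_mem _ he x hb) hxv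
    · exact ⟨s(c, a), by simp, Or.inl ⟨hec, by rw [ren_pair a rB c hca, heq]⟩⟩
  · rcases ren_image_elim H a a1 a2 Finset.subset_union_right rR hrR h with
      ⟨he, ha⟩ | ⟨c, hca, hcv, hec, heq⟩
    · exact absurd (H.red_mem _ he x hb) hxv
    · exact ⟨s(c, a), by simp, Or.inr ⟨hec, by rw [ren_pair a rR c hca, heq]⟩⟩

lemma distinct_pre {e1 e2 e1' e2' : Sym2 ℕ} (hne : e1' ≠ e2')
    (p1 : (e1 ∈ H.blue ∧ ren a rB e1 = e1') ∨ (e1 ∈ H.red ∧ ren a rR e1 = e1'))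
    (p2 : (e2 ∈ H.blue ∧ ren a rB e2 = e2') ∨ (e2 ∈ H.red ∧ ren a rR e2 = e2')) :
    e1 ≠ e2 ∧ e1 ∈ H.blue ∪ H.red ∧ e2 ∈ H.blue ∪ H.red := by
  refine ⟨?_, ?_, ?_⟩
  · rintro rfl
    rcases p1 with ⟨m1, r1⟩ | ⟨m1, r1⟩ <;> rcases p2 with ⟨m2, r2⟩ | ⟨m2, r2⟩
    · exact hne (r1 ▸ r2 ▸ rfl)
    · exact Finset.disjoint_left.mp H.disj m1 m2
    · exact Finset.disjoint_left.mp H.disj m2 m1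
    · exact hne (r1 ▸ r2 ▸ rfl)
  · rcases p1 with ⟨m1, _⟩ | ⟨m1, _⟩ <;> simp [m1]
  · rcases p2 with ⟨m2, _⟩ | ⟨m2, _⟩ <;> simp [m2]

lemma good_down {b : ℕ} (hb1 : b ≠ a1) (hb2 : b ≠ a2)
    (hg : Good (splitICG H a a1 a2 rB rR hrB hrR h1 h2) b) : Good H b := by
  obtain ⟨e1', he1', e2', he2', hne, hm1, hm2⟩ := hg
  obtain ⟨e1, hb1', p1⟩ := pre_at hrB hrR h1 h2 hm1 hb1 hb2 he1'
  obtain ⟨e2, hb2', p2⟩ := pre_at hrB hrR h1 h2 hm2 hb1 hb2 he2'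
  obtain ⟨hne', hu1, hu2⟩ := distinct_pre hne p1 p2
  exact ⟨e1, hu1, e2, hu2, hne', hb1', hb2'⟩

lemma good_copy {x : ℕ} (hx : x = a1 ∨ x = a2)
    (hg : Good (splitICG H a a1 a2 rB rR hrB hrR h1 h2) x) : Good H a := by
  obtain ⟨e1', he1', e2', he2', hne, hm1, hm2⟩ := hg
  obtain ⟨e1, hb1', p1⟩ := pre_at_copy hrB hrR h1 h2 hx hm1 he1'
  obtain ⟨e2, hb2', p2⟩ := pre_at_copy hrB hrR h1 h2 hx hm2 he2'
  obtain ⟨hne', hu1, hu2⟩ := distinct_pre hne p1 p2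
  exact ⟨e1, hu1, e2, hu2, hne', hb1', hb2'⟩

lemma permSplit_splitICG (ha : a ∈ H.verts) (h12 : a1 ≠ a2) :
    PermSplit H (splitICG H a a1 a2 rB rR hrB hrR h1 h2) := by
  refine ⟨a, a1, a2, ha, h1, h2, h12, rfl, ?_, ?_, ?_⟩
  · intro u w hu hw hu1 hu2 hw1 hw2
    constructor
    · exact (mem_away H a a1 a2 Finset.subset_union_left rB hrB u w hu hw hu1 hu2 hw1 hw2).symm
    · exact (mem_away H a a1 a2 Finset.subset_union_right rR hrR u w hu hw hu1 hu2 hw1 hw2).symm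
  · intro u hu
    have hua : u ≠ a := by
      have := H.blue_nd _ hu
      simpa [Sym2.isDiag_iff_proj_eq] using this
    have := Finset.mem_image_of_mem (ren a rB) hu
    rw [ren_pair a rB u hua] at this
    rcases hrB u with h | h <;> rw [h] at this <;> [left; right] <;> exact this
  · intro u hu
    have hua : u ≠ a := by
      have := H.red_nd _ hu
      simpa [Sym2.isDiag_iff_proj_eq] using this
    have := Finset.mem_image_of_mem (ren a rR) hu
    rw [ren_pair a rR u hua] at this
    rcases hrR u with h | h <;> rw [h] at this <;> [left; right] <;> exact this

end Split2

lemma good_of_cycle (G : ICG) {l : List ℕ} {u v : ℕ} (hnd : l.Nodup)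
    (hch : l.Chain' (fun a b => s(a, b) ∈ G.blue))
    (hu : l.head? = some u) (hv : l.getLast? = some v) (hred : s(u, v) ∈ G.red) :
    ∀ x ∈ l, Good G x := by
  have hne : l ≠ [] := by intro hh; subst hh; simp at hu
  have hlen : 0 < l.length := List.length_pos_iff.mpr hne
  have hu' : u = l.get ⟨0, hlen⟩ := by
    rw [List.head?_eq_getElem?] at hu
    rw [List.getElem?_eq_getElem hlen] at hu
    simp at hu
    simp [← hu, List.get_eq_getElem]
  have hv' : v = l.get ⟨l.length - 1, by omega⟩ := by
    rw [List.getLast?_eq_getElem?] at hv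
    rw [List.getElem?_eq_getElem (by omega)] at hv
    simp at hv
    simp [← hv, List.get_eq_getElem]
  have hlen2 : 2 ≤ l.length := by
    by_contra hc
    have h1 : l.length = 1 := by omega
    have huv : u = v := by rw [hu', hv']; congr 1; omega
    exact G.red_nd _ hred (by simp [huv, Sym2.isDiag_iff_proj_eq])
  have hch' := List.isChain_iff_getElem.mp hch
  intro x hx
  rcases List.mem_iff_get.mp hx with ⟨⟨i, hi⟩, rfl⟩
  have hinj := fun {j k : Fin l.length} => (List.Nodup.get_inj_iff hnd (i := j) (j := k))
  by_cases hi0 : i = 0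
  · subst hi0
    have e1 : s(l.get ⟨0, hlen⟩, l.get ⟨1, by omega⟩) ∈ G.blue := hch' 0 (by omega)
    refine ⟨s(l.get ⟨0, hlen⟩, l.get ⟨1, by omega⟩), Finset.mem_union_left _ e1,
      s(u, v), Finset.mem_union_right _ hred, ?_, by simp, ?_⟩
    · intro hc
      rw [hc] at e1
      exact Finset.disjoint_left.mp G.disj e1 hred
    · rw [hu']; simp
  · by_cases hil : i = l.length - 1
    · subst hil
      have h22 : l.length - 2 + 1 = l.length - 1 := by omega
      have e1 : s(l.get ⟨l.length - 2, by omega⟩, l.get ⟨l.length - 1, by omega⟩) ∈ G.blue := by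
        have := hch' (l.length - 2) (by omega)
        simpa only [h22, List.get_eq_getElem] using this
      refine ⟨s(l.get ⟨l.length - 2, by omega⟩, l.get ⟨l.length - 1, by omega⟩),
        Finset.mem_union_left _ e1, s(u, v), Finset.mem_union_right _ hred, ?_, ?_, ?_⟩
      · intro hc
        rw [hc] at e1
        exact Finset.disjoint_left.mp G.disj e1 hred
      · simp
      · rw [hv']; simp
    · have hi1 : i - 1 + 1 = i := by omega
      have e1 : s(l.get ⟨i - 1, by omega⟩, l.get ⟨i, hi⟩) ∈ G.blue := by
        have := hch' (i - 1) (by omega)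
        simpa only [hi1, List.get_eq_getElem] using this
      have e2 : s(l.get ⟨i, hi⟩, l.get ⟨i + 1, by omega⟩) ∈ G.blue := hch' i (by omega)
      refine ⟨s(l.get ⟨i - 1, by omega⟩, l.get ⟨i, hi⟩), Finset.mem_union_left _ e1,
        s(l.get ⟨i, hi⟩, l.get ⟨i + 1, by omega⟩), Finset.mem_union_left _ e2, ?_, by simp, by simp⟩
      intro hc
      rw [Sym2.eq_iff] at hc
      rcases hc with ⟨hc1, hc2⟩ | ⟨hc1, hc2⟩
      · have h' := hinj.mp hc2
        rw [Fin.mk.injEq] at h'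
        omega
      · have h' := hinj.mp hc1
        rw [Fin.mk.injEq] at h'
        omega

lemma hasErr_transfer {φ : ℕ → ℕ} {H H'' : ICG} (hrel : RelF φ H H'') :
    HasErrCycle H'' → HasErrCycle H := by
  obtain ⟨_, _, hinj, hblue, hred⟩ := hrel
  rintro ⟨l, u, v, hnd, hch, hu, hv, hr⟩
  have hg : ∀ x ∈ l, Good H'' x := good_of_cycle H'' hnd hch hu hv hr
  have hul : u ∈ l := by
    have hne : l ≠ [] := by intro hh; subst hh; simp at hu
    have := List.head?_eq_head hne
    rw [this] at hu
    rw [Option.some_inj] at hu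
    rw [← hu]
    exact List.head_mem hne
  have hvl : v ∈ l := by
    have hne : l ≠ [] := by intro hh; subst hh; simp at hv
    have := List.getLast?_eq_getLast hne
    rw [this] at hv
    rw [Option.some_inj] at hv
    rw [← hv]
    exact List.getLast_mem hne
  refine ⟨l.map φ, φ u, φ v, ?_, ?_, ?_, ?_, ?_⟩
  · exact List.Nodup.map_on (fun x hx y hy hxy => hinj (hg x hx) (hg y hy) hxy) hnd
  · change List.IsChain _ _ at hch ⊢
    rw [List.isChain_map]
    rw [List.isChain_iff_getElem] at hch ⊢
    intro i hilt
    exact hblue _ _ (hg _ (List.getElem_mem _)) (hg _ (List.getElem_mem _)) (hch i hilt)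
  · rw [List.head?_map, hu]; rfl
  · rw [List.getLast?_map, hv]; rfl
  · exact hred _ _ (hg u hul) (hg v hvl) hr

lemma good_mem_verts (G : ICG) {b : ℕ} (hg : Good G b) : b ∈ G.verts := by
  obtain ⟨e1, he1, _, _, _, hm, _⟩ := hg
  rcases Finset.mem_union.mp he1 with h | h
  · exact G.blue_mem _ h b hm
  · exact G.red_mem _ h b hm

section Split3

variable {H : ICG} {a a1 a2 : ℕ} {rB rR : ℕ → ℕ}
variable (hrB : ∀ c, rB c = a1 ∨ rB c = a2) (hrR : ∀ c, rR c = a1 ∨ rR c = a2)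
variable (h1 : a1 ∉ H.verts) (h2 : a2 ∉ H.verts)

lemma a_not_in_split (ha : a ∈ H.verts) :
    a ∉ (splitICG H a a1 a2 rB rR hrB hrR h1 h2).verts := by
  have ha1 : a ≠ a1 := fun hh => h1 (hh ▸ ha)
  have ha2 : a ≠ a2 := fun hh => h2 (hh ▸ ha)
  simp [splitICG, ha1, ha2]

include h1 h2 in
lemma mem_split_elim {S : Finset (Sym2 ℕ)} (hS : S ⊆ H.blue ∪ H.red) {r : ℕ → ℕ}
    (hr : ∀ c, r c = a1 ∨ r c = a2) {b c : ℕ} (ha : a ∈ H.verts)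
    (hbc : s(b, c) ∈ S.image (ren a r)) :
    (b ≠ a1 ∧ b ≠ a2 ∧ c ≠ a1 ∧ c ≠ a2 ∧ s(b, c) ∈ S) ∨
    (b ≠ a1 ∧ b ≠ a2 ∧ (c = a1 ∨ c = a2) ∧ s(b, a) ∈ S ∧ r b = c) ∨
    (c ≠ a1 ∧ c ≠ a2 ∧ (b = a1 ∨ b = a2) ∧ s(c, a) ∈ S ∧ r c = b) := by
  have ha1 : a ≠ a1 := fun hh => h1 (hh ▸ ha)
  have ha2 : a ≠ a2 := fun hh => h2 (hh ▸ ha)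
  by_cases hb : b = a1 ∨ b = a2 <;> by_cases hc : c = a1 ∨ c = a2
  · exfalso
    by_cases hbc' : b = c
    · rw [hbc'] at hbc
      rcases ren_image_elim H a a1 a2 hS r hr hbc with ⟨he, _⟩ | ⟨d, hda, hdv, hed, heq⟩
      · have hnd : ¬ (s(c, c)).IsDiag := by
          rcases Finset.mem_union.mp (hS he) with h | h
          · exact H.blue_nd _ h
          · exact H.red_nd _ h
        exact hnd (by simp [Sym2.isDiag_iff_proj_eq])
      · have hd1 : c = d := by
          rcases Sym2.eq_iff.mp heq with ⟨hx, -⟩ | ⟨-, hx⟩ <;> exact hx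
        rw [hbc'] at hb
        rcases hb with h | h <;> rw [h] at hd1 <;> subst hd1 <;> [exact h1 hdv; exact h2 hdv]
    · have hpair : s(b, c) = s(a1, a2) := by
        rcases hb with h | h <;> rcases hc with h' | h'
        · exact absurd (h.trans h'.symm) hbc'
        · rw [h, h']
        · rw [h, h']; exact Sym2.eq_swap
        · exact absurd (h.trans h'.symm) hbc'
      rw [hpair] at hbc
      exact no_copy_edge H a a1 a2 h1 h2 hS r hr hbc
  · push_neg at hc
    rw [Sym2.eq_swap] at hbc
    rcases (mem_copy H a a1 a2 h1 h2 hS r hr c b hb hc.1 hc.2).mp hbc with ⟨hm, hrc⟩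
    exact Or.inr (Or.inr ⟨hc.1, hc.2, hb, hm, hrc⟩)
  · push_neg at hb
    rcases (mem_copy H a a1 a2 h1 h2 hS r hr b c hc hb.1 hb.2).mp hbc with ⟨hm, hrc⟩
    exact Or.inr (Or.inl ⟨hb.1, hb.2, hc, hm, hrc⟩)
  · push_neg at hb hc
    have hba : b ≠ a := by
      intro hh
      rw [hh] at hbc
      exact a_not_mem H a a1 a2 hS r hr ha1 ha2 (Finset.mem_image.mpr (Finset.mem_image.mp hbc)) (by simp)
    have hca : c ≠ a := by
      intro hh
      rw [hh] at hbc
      exact a_not_mem H a a1 a2 hS r hr ha1 ha2 (Finset.mem_image.mpr (Finset.mem_image.mp hbc)) (by simp)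
    exact Or.inl ⟨hb.1, hb.2, hc.1, hc.2,
      (mem_away H a a1 a2 hS r hr b c hba hca hb.1 hb.2 hc.1 hc.2).mp hbc⟩

end Split3

lemma fresh1_not_mem (s : Finset ℕ) : s.sup id + 1 ∉ s := by
  intro h; have := Finset.le_sup (f := id) h; simp only [id_eq] at this; omega

lemma fresh2_not_mem (s : Finset ℕ) : s.sup id + 2 ∉ s := by
  intro h; have := Finset.le_sup (f := id) h; simp only [id_eq] at this; omega

lemma step_split {φ : ℕ → ℕ} {H H'' H' : ICG} (hrel : RelF φ H H'') (hsp : PermSplit H H') :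
    ∃ ψ H''', PermSplit H'' H''' ∧ RelF ψ H' H''' := by
  classical
  obtain ⟨hne, hin, hinj, hB, hR⟩ := hrel
  obtain ⟨v, v1, v2, hv, hv1, hv2, hv12, hverts, haway, hbl, hrd⟩ := hsp
  set a1 := H''.verts.sup id + 1 with ha1def
  set a2 := H''.verts.sup id + 2 with ha2def
  have h1 : a1 ∉ H''.verts := fresh1_not_mem _
  have h2 : a2 ∉ H''.verts := fresh2_not_mem _
  have h12 : a1 ≠ a2 := by omega
  have hvmem : ∀ x, x ∈ H.verts → x ∈ H'.verts ∨ x = v := by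
    intro x hx
    by_cases hxv : x = v
    · exact Or.inr hxv
    · left; rw [hverts]; simp [Finset.mem_insert, Finset.mem_erase, hxv, hx]
  have hv1new : ∀ x, x ∈ H.verts → x ≠ v1 ∧ x ≠ v2 := by
    intro x hx
    exact ⟨fun hh => hv1 (hh ▸ hx), fun hh => hv2 (hh ▸ hx)⟩
  by_cases hA : ∃ b, Good H'' b ∧ φ b = v
  · obtain ⟨a, hga, hφa⟩ := hA
    have hav : a ∈ H''.verts := good_mem_verts H'' hga
    set rB : ℕ → ℕ := fun c => if s(φ c, v1) ∈ H'.blue then a1 else a2 with hrBdef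
    set rR : ℕ → ℕ := fun c => if s(φ c, v1) ∈ H'.red then a1 else a2 with hrRdef
    have hrB : ∀ c, rB c = a1 ∨ rB c = a2 := by
      intro c; rw [hrBdef]; dsimp only; split <;> simp
    have hrR : ∀ c, rR c = a1 ∨ rR c = a2 := by
      intro c; rw [hrRdef]; dsimp only; split <;> simp
    set T := splitICG H'' a a1 a2 rB rR hrB hrR h1 h2 with hTdef
    set ψ : ℕ → ℕ := fun x => if x = a1 then v1 else if x = a2 then v2 else φ x with hψdef
    have hnotaT : a ∉ T.verts := a_not_in_split hrB hrR h1 h2 hav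
    have hgd : ∀ b, Good T b → b ≠ a1 → b ≠ a2 → Good H'' b ∧ b ≠ a := by
      intro b hg hb1 hb2
      refine ⟨good_down hrB hrR h1 h2 hb1 hb2 hg, ?_⟩
      intro hh
      exact hnotaT (hh ▸ good_mem_verts T hg)
    have hφv : ∀ b, Good H'' b → b ≠ a → φ b ≠ v := by
      intro b hg hba hbv
      exact hba (hinj hg hga (by rw [hbv, hφa]))
    have hψa1 : ψ a1 = v1 := by simp [hψdef]
    have hψa2 : ψ a2 = v2 := by simp [hψdef, Ne.symm h12, h12]
    have hψo : ∀ b, b ≠ a1 → b ≠ a2 → ψ b = φ b := by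
      intro b hb1 hb2; rw [hψdef]; simp [hb1, hb2]
    refine ⟨ψ, T, permSplit_splitICG hrB hrR h1 h2 hav h12, ?_, ?_, ?_, ?_, ?_⟩
    · intro _
      exact ⟨a1, Finset.mem_insert_self _ _⟩
    · intro b hgb
      by_cases hb1 : b = a1
      · rw [hb1, hψa1, hverts]; simp
      · by_cases hb2 : b = a2
        · rw [hb2, hψa2, hverts]; simp
        · obtain ⟨hg'', hba⟩ := hgd b hgb hb1 hb2
          rw [hψo b hb1 hb2, hverts]
          simp only [Finset.mem_insert, Finset.mem_erase]
          exact Or.inr (Or.inr ⟨hφv b hg'' hba, hin b hg''⟩)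
    · intro x hx y hy hxy
      simp only [Set.mem_setOf_eq] at hx hy
      by_cases hx1 : x = a1
      · by_cases hy1 : y = a1
        · rw [hx1, hy1]
        · by_cases hy2 : y = a2
          · exfalso; rw [hx1, hy2, hψa1, hψa2] at hxy; exact hv12 hxy
          · exfalso
            obtain ⟨hg'', _⟩ := hgd y hy hy1 hy2
            rw [hx1, hψa1, hψo y hy1 hy2] at hxy
            exact hv1 (hxy ▸ hin y hg'')
      · by_cases hx2 : x = a2
        · by_cases hy1 : y = a1
          · exfalso; rw [hx2, hy1, hψa2, hψa1] at hxy; exact hv12 hxy.symm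
          · by_cases hy2 : y = a2
            · rw [hx2, hy2]
            · exfalso
              obtain ⟨hg'', _⟩ := hgd y hy hy1 hy2
              rw [hx2, hψa2, hψo y hy1 hy2] at hxy
              exact hv2 (hxy ▸ hin y hg'')
        · by_cases hy1 : y = a1
          · exfalso
            obtain ⟨hg'', _⟩ := hgd x hx hx1 hx2
            rw [hy1, hψa1, hψo x hx1 hx2] at hxy
            exact hv1 (hxy.symm ▸ hin x hg'')
          · by_cases hy2 : y = a2
            · exfalso
              obtain ⟨hg'', _⟩ := hgd x hx hx1 hx2
              rw [hy2, hψa2, hψo x hx1 hx2] at hxy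
              exact hv2 (hxy.symm ▸ hin x hg'')
            · obtain ⟨hgx, _⟩ := hgd x hx hx1 hx2
              obtain ⟨hgy, _⟩ := hgd y hy hy1 hy2
              rw [hψo x hx1 hx2, hψo y hy1 hy2] at hxy
              exact hinj hgx hgy hxy
    · have hcopyB : ∀ b c, Good T b → b ≠ a1 → b ≠ a2 → (c = a1 ∨ c = a2) →
          s(b, a) ∈ H''.blue → rB b = c → s(ψ b, ψ c) ∈ H'.blue := by
        intro b c hgb hb1 hb2 hcc hm hrc
        obtain ⟨hgb'', hba⟩ := hgd b hgb hb1 hb2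
        rw [hψo b hb1 hb2]
        rcases hcc with hcc | hcc
        · rw [hcc, hψa1]
          rw [hcc] at hrc
          by_contra hno
          rw [hrBdef] at hrc; dsimp only at hrc
          rw [if_neg hno] at hrc
          exact h12 hrc.symm
        · rw [hcc, hψa2]
          rw [hcc] at hrc
          have hno : s(φ b, v1) ∉ H'.blue := by
            intro hyes
            rw [hrBdef] at hrc; dsimp only at hrc
            rw [if_pos hyes] at hrc
            exact h12 hrc
          have hHb : s(φ b, v) ∈ H.blue := by
            have := hB b a hgb'' hga hm
            rwa [hφa] at this
          rcases hbl (φ b) hHb with h | h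
          · exact absurd h hno
          · exact h
      intro b c hgb hgc hbc
      have hbc' : s(b, c) ∈ H''.blue.image (ren a rB) := hbc
      rcases mem_split_elim h1 h2 Finset.subset_union_left hrB hav hbc' with
        ⟨hb1, hb2, hc1, hc2, hm⟩ | ⟨hb1, hb2, hcc, hm, hrc⟩ | ⟨hc1, hc2, hbb, hm, hrc⟩
      · obtain ⟨hgb'', hba⟩ := hgd b hgb hb1 hb2
        obtain ⟨hgc'', hca⟩ := hgd c hgc hc1 hc2
        have hHb := hB b c hgb'' hgc'' hm
        obtain ⟨hbn1, hbn2⟩ := hv1new _ (hin b hgb'')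
        obtain ⟨hcn1, hcn2⟩ := hv1new _ (hin c hgc'')
        rw [hψo b hb1 hb2, hψo c hc1 hc2]
        exact ((haway _ _ (hφv b hgb'' hba) (hφv c hgc'' hca) hbn1 hbn2 hcn1 hcn2).1).mp hHb
      · exact hcopyB b c hgb hb1 hb2 hcc hm hrc
      · rw [Sym2.eq_swap]
        exact hcopyB c b hgc hc1 hc2 hbb hm hrc
    · have hcopyR : ∀ b c, Good T b → b ≠ a1 → b ≠ a2 → (c = a1 ∨ c = a2) →
          s(b, a) ∈ H''.red → rR b = c → s(ψ b, ψ c) ∈ H'.red := by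
        intro b c hgb hb1 hb2 hcc hm hrc
        obtain ⟨hgb'', hba⟩ := hgd b hgb hb1 hb2
        rw [hψo b hb1 hb2]
        rcases hcc with hcc | hcc
        · rw [hcc, hψa1]
          rw [hcc] at hrc
          by_contra hno
          rw [hrRdef] at hrc; dsimp only at hrc
          rw [if_neg hno] at hrc
          exact h12 hrc.symm
        · rw [hcc, hψa2]
          rw [hcc] at hrc
          have hno : s(φ b, v1) ∉ H'.red := by
            intro hyes
            rw [hrRdef] at hrc; dsimp only at hrc
            rw [if_pos hyes] at hrc
            exact h12 hrc
          have hHb : s(φ b, v) ∈ H.red := by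
            have := hR b a hgb'' hga hm
            rwa [hφa] at this
          rcases hrd (φ b) hHb with h | h
          · exact absurd h hno
          · exact h
      intro b c hgb hgc hbc
      have hbc' : s(b, c) ∈ H''.red.image (ren a rR) := hbc
      rcases mem_split_elim h1 h2 Finset.subset_union_right hrR hav hbc' with
        ⟨hb1, hb2, hc1, hc2, hm⟩ | ⟨hb1, hb2, hcc, hm, hrc⟩ | ⟨hc1, hc2, hbb, hm, hrc⟩
      · obtain ⟨hgb'', hba⟩ := hgd b hgb hb1 hb2
        obtain ⟨hgc'', hca⟩ := hgd c hgc hc1 hc2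
        have hHb := hR b c hgb'' hgc'' hm
        obtain ⟨hbn1, hbn2⟩ := hv1new _ (hin b hgb'')
        obtain ⟨hcn1, hcn2⟩ := hv1new _ (hin c hgc'')
        rw [hψo b hb1 hb2, hψo c hc1 hc2]
        exact ((haway _ _ (hφv b hgb'' hba) (hφv c hgc'' hca) hbn1 hbn2 hcn1 hcn2).2).mp hHb
      · exact hcopyR b c hgb hb1 hb2 hcc hm hrc
      · rw [Sym2.eq_swap]
        exact hcopyR c b hgc hc1 hc2 hbb hm hrc
  · -- Case B : no good vertex maps to v
    obtain ⟨a, hav⟩ := hne ⟨v, hv⟩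
    set rB : ℕ → ℕ := fun _ => a1 with hrBdef
    have hrB : ∀ c, rB c = a1 ∨ rB c = a2 := fun _ => Or.inl rfl
    set T := splitICG H'' a a1 a2 rB rB hrB hrB h1 h2 with hTdef
    set ψ : ℕ → ℕ := fun x => if x = a1 then φ a else if x = a2 then φ a else φ x with hψdef
    have hnotaT : a ∉ T.verts := a_not_in_split hrB hrB h1 h2 hav
    have hgd : ∀ b, Good T b → b ≠ a1 → b ≠ a2 → Good H'' b ∧ b ≠ a := by
      intro b hg hb1 hb2
      refine ⟨good_down hrB hrB h1 h2 hb1 hb2 hg, ?_⟩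
      intro hh
      exact hnotaT (hh ▸ good_mem_verts T hg)
    have hnogv : ∀ b, Good H'' b → φ b ≠ v := fun b hg hh => hA ⟨b, hg, hh⟩
    have hψa1 : ψ a1 = φ a := by simp [hψdef]
    have hψa2 : ψ a2 = φ a := by simp [hψdef, Ne.symm h12, h12]
    have hψo : ∀ b, b ≠ a1 → b ≠ a2 → ψ b = φ b := by
      intro b hb1 hb2; rw [hψdef]; simp [hb1, hb2]
    have hno2 : ∀ e', e' ∈ T.blue ∪ T.red → a2 ∉ e' := by
      intro e' he' hmem
      rcases Finset.mem_union.mp he' with h | h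
      · rcases ren_image_elim H'' a a1 a2 Finset.subset_union_left rB hrB h with
          ⟨he, _⟩ | ⟨d, hda, hdv, hed, heq⟩
        · exact h2 (H''.blue_mem _ he a2 hmem)
        · rw [heq] at hmem
          rcases Sym2.mem_iff.mp hmem with hh | hh
          · exact h2 (hh ▸ hdv)
          · exact h12 hh.symm
      · rcases ren_image_elim H'' a a1 a2 Finset.subset_union_right rB hrB h with
          ⟨he, _⟩ | ⟨d, hda, hdv, hed, heq⟩
        · exact h2 (H''.red_mem _ he a2 hmem)
        · rw [heq] at hmem
          rcases Sym2.mem_iff.mp hmem with hh | hh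
          · exact h2 (hh ▸ hdv)
          · exact h12 hh.symm
    have hga2 : ¬ Good T a2 := by
      rintro ⟨e1, he1, _, _, _, hm1, _⟩
      exact hno2 e1 he1 hm1
    have hga1 : Good T a1 → Good H'' a := fun hg => good_copy hrB hrB h1 h2 (Or.inl rfl) hg
    refine ⟨ψ, T, permSplit_splitICG hrB hrB h1 h2 hav h12, ?_, ?_, ?_, ?_, ?_⟩
    · intro _
      exact ⟨a1, Finset.mem_insert_self _ _⟩
    · intro b hgb
      by_cases hb1 : b = a1
      · rw [hb1, hψa1, hverts]
        have hga'' := hga1 (hb1 ▸ hgb)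
        simp only [Finset.mem_insert, Finset.mem_erase]
        exact Or.inr (Or.inr ⟨hnogv a hga'', hin a hga''⟩)
      · by_cases hb2 : b = a2
        · exact absurd (hb2 ▸ hgb) hga2
        · obtain ⟨hg'', hba⟩ := hgd b hgb hb1 hb2
          rw [hψo b hb1 hb2, hverts]
          simp only [Finset.mem_insert, Finset.mem_erase]
          exact Or.inr (Or.inr ⟨hnogv b hg'', hin b hg''⟩)
    · intro x hx y hy hxy
      simp only [Set.mem_setOf_eq] at hx hy
      by_cases hx2 : x = a2
      · exact absurd (hx2 ▸ hx) hga2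
      by_cases hy2 : y = a2
      · exact absurd (hy2 ▸ hy) hga2
      by_cases hx1 : x = a1
      · by_cases hy1 : y = a1
        · rw [hx1, hy1]
        · exfalso
          obtain ⟨hgy, hya⟩ := hgd y hy hy1 hy2
          rw [hx1, hψa1, hψo y hy1 hy2] at hxy
          exact hya (hinj hgy (hga1 (hx1 ▸ hx)) hxy.symm).symm.symm
      · by_cases hy1 : y = a1
        · exfalso
          obtain ⟨hgx, hxa⟩ := hgd x hx hx1 hx2
          rw [hy1, hψa1, hψo x hx1 hx2] at hxy
          exact hxa (hinj hgx (hga1 (hy1 ▸ hy)) hxy)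
        · obtain ⟨hgx, _⟩ := hgd x hx hx1 hx2
          obtain ⟨hgy, _⟩ := hgd y hy hy1 hy2
          rw [hψo x hx1 hx2, hψo y hy1 hy2] at hxy
          exact hinj hgx hgy hxy
    · intro b c hgb hgc hbc
      have hbc' : s(b, c) ∈ H''.blue.image (ren a rB) := hbc
      rcases mem_split_elim h1 h2 Finset.subset_union_left hrB hav hbc' with
        ⟨hb1, hb2, hc1, hc2, hm⟩ | ⟨hb1, hb2, hcc, hm, hrc⟩ | ⟨hc1, hc2, hbb, hm, hrc⟩
      · obtain ⟨hgb'', hba⟩ := hgd b hgb hb1 hb2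
        obtain ⟨hgc'', hca⟩ := hgd c hgc hc1 hc2
        have hHb := hB b c hgb'' hgc'' hm
        obtain ⟨hbn1, hbn2⟩ := hv1new _ (hin b hgb'')
        obtain ⟨hcn1, hcn2⟩ := hv1new _ (hin c hgc'')
        rw [hψo b hb1 hb2, hψo c hc1 hc2]
        exact ((haway _ _ (hnogv b hgb'') (hnogv c hgc'') hbn1 hbn2 hcn1 hcn2).1).mp hHb
      · rcases hcc with hcc | hcc
        swap
        · exact absurd (hcc ▸ hgc) hga2
        obtain ⟨hgb'', hba⟩ := hgd b hgb hb1 hb2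
        have hga'' : Good H'' a := hga1 (hcc ▸ hgc)
        have hHb := hB b a hgb'' hga'' hm
        obtain ⟨hbn1, hbn2⟩ := hv1new _ (hin b hgb'')
        obtain ⟨han1, han2⟩ := hv1new _ (hin a hga'')
        rw [hψo b hb1 hb2, hcc, hψa1]
        exact ((haway _ _ (hnogv b hgb'') (hnogv a hga'') hbn1 hbn2 han1 han2).1).mp hHb
      · rcases hbb with hbb | hbb
        swap
        · exact absurd (hbb ▸ hgb) hga2
        obtain ⟨hgc'', hca⟩ := hgd c hgc hc1 hc2
        have hga'' : Good H'' a := hga1 (hbb ▸ hgb)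
        have hHb := hB c a hgc'' hga'' hm
        obtain ⟨hcn1, hcn2⟩ := hv1new _ (hin c hgc'')
        obtain ⟨han1, han2⟩ := hv1new _ (hin a hga'')
        rw [Sym2.eq_swap, hψo c hc1 hc2, hbb, hψa1]
        exact ((haway _ _ (hnogv c hgc'') (hnogv a hga'') hcn1 hcn2 han1 han2).1).mp hHb
    · intro b c hgb hgc hbc
      have hbc' : s(b, c) ∈ H''.red.image (ren a rB) := hbc
      rcases mem_split_elim h1 h2 Finset.subset_union_right hrB hav hbc' with
        ⟨hb1, hb2, hc1, hc2, hm⟩ | ⟨hb1, hb2, hcc, hm, hrc⟩ | ⟨hc1, hc2, hbb, hm, hrc⟩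
      · obtain ⟨hgb'', hba⟩ := hgd b hgb hb1 hb2
        obtain ⟨hgc'', hca⟩ := hgd c hgc hc1 hc2
        have hHb := hR b c hgb'' hgc'' hm
        obtain ⟨hbn1, hbn2⟩ := hv1new _ (hin b hgb'')
        obtain ⟨hcn1, hcn2⟩ := hv1new _ (hin c hgc'')
        rw [hψo b hb1 hb2, hψo c hc1 hc2]
        exact ((haway _ _ (hnogv b hgb'') (hnogv c hgc'') hbn1 hbn2 hcn1 hcn2).2).mp hHb
      · rcases hcc with hcc | hcc
        swap
        · exact absurd (hcc ▸ hgc) hga2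
        obtain ⟨hgb'', hba⟩ := hgd b hgb hb1 hb2
        have hga'' : Good H'' a := hga1 (hcc ▸ hgc)
        have hHb := hR b a hgb'' hga'' hm
        obtain ⟨hbn1, hbn2⟩ := hv1new _ (hin b hgb'')
        obtain ⟨han1, han2⟩ := hv1new _ (hin a hga'')
        rw [hψo b hb1 hb2, hcc, hψa1]
        exact ((haway _ _ (hnogv b hgb'') (hnogv a hga'') hbn1 hbn2 han1 han2).2).mp hHb
      · rcases hbb with hbb | hbb
        swap
        · exact absurd (hbb ▸ hgb) hga2
        obtain ⟨hgc'', hca⟩ := hgd c hgc hc1 hc2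
        have hga'' : Good H'' a := hga1 (hbb ▸ hgb)
        have hHb := hR c a hgc'' hga'' hm
        obtain ⟨hcn1, hcn2⟩ := hv1new _ (hin c hgc'')
        obtain ⟨han1, han2⟩ := hv1new _ (hin a hga'')
        rw [Sym2.eq_swap, hψo c hc1 hc2, hbb, hψa1]
        exact ((haway _ _ (hnogv c hgc'') (hnogv a hga'') hcn1 hcn2 han1 han2).2).mp hHb

lemma step_recolor {φ : ℕ → ℕ} {H H'' H' : ICG} (hrel : RelF φ H H'') (hrc : Recolor H H') :
    ∃ ψ H''', PermSplit H'' H''' ∧ RelF ψ H' H''' := by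
  classical
  obtain ⟨hne, hin, hinj, hB, hR⟩ := hrel
  obtain ⟨hverts, e, he⟩ := hrc
  revert he
  induction e using Sym2.ind with
  | _ p q =>
  intro he
  have hpq : p ≠ q := by
    rcases he with ⟨hm, _, _⟩ | ⟨hm, _, _⟩
    · have := H.blue_nd _ hm; simpa [Sym2.isDiag_iff_proj_eq] using this
    · have := H.red_nd _ hm; simpa [Sym2.isDiag_iff_proj_eq] using this
  have hp : p ∈ H.verts := by
    rcases he with ⟨hm, _, _⟩ | ⟨hm, _, _⟩
    · exact H.blue_mem _ hm p (by simp)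
    · exact H.red_mem _ hm p (by simp)
  have hpresB : ∀ s, s ∈ H.blue → s ≠ s(p, q) → s ∈ H'.blue := by
    intro s hs hsne
    rcases he with ⟨_, hb, _⟩ | ⟨_, _, hb⟩
    · rw [hb]; exact Finset.mem_erase.mpr ⟨hsne, hs⟩
    · rw [hb]; exact Finset.mem_insert_of_mem hs
  have hpresR : ∀ s, s ∈ H.red → s ≠ s(p, q) → s ∈ H'.red := by
    intro s hs hsne
    rcases he with ⟨_, _, hb⟩ | ⟨_, hb, _⟩
    · rw [hb]; exact Finset.mem_insert_of_mem hs
    · rw [hb]; exact Finset.mem_erase.mpr ⟨hsne, hs⟩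
  set a1 := H''.verts.sup id + 1 with ha1def
  set a2 := H''.verts.sup id + 2 with ha2def
  have h1 : a1 ∉ H''.verts := fresh1_not_mem _
  have h2 : a2 ∉ H''.verts := fresh2_not_mem _
  have h12 : a1 ≠ a2 := by omega
  by_cases hA : ∃ b, Good H'' b ∧ φ b = p
  · obtain ⟨a, hga, hφa⟩ := hA
    have hav : a ∈ H''.verts := good_mem_verts H'' hga
    set r : ℕ → ℕ := fun c => if Good H'' c ∧ φ c = q then a2 else a1 with hrdef
    have hr : ∀ c, r c = a1 ∨ r c = a2 := by
      intro c; rw [hrdef]; dsimp only; split <;> simp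
    set T := splitICG H'' a a1 a2 r r hr hr h1 h2 with hTdef
    set ψ : ℕ → ℕ := fun x => if x = a1 then p else if x = a2 then p else φ x with hψdef
    have hnotaT : a ∉ T.verts := a_not_in_split hr hr h1 h2 hav
    have hgd : ∀ b, Good T b → b ≠ a1 → b ≠ a2 → Good H'' b ∧ b ≠ a := by
      intro b hg hb1 hb2
      refine ⟨good_down hr hr h1 h2 hb1 hb2 hg, ?_⟩
      intro hh
      exact hnotaT (hh ▸ good_mem_verts T hg)
    have hψa1 : ψ a1 = p := by simp [hψdef]
    have hψa2 : ψ a2 = p := by simp [hψdef, Ne.symm h12, h12]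
    have hψo : ∀ b, b ≠ a1 → b ≠ a2 → ψ b = φ b := by
      intro b hb1 hb2; rw [hψdef]; simp [hb1, hb2]
    have hat2 : ∀ e', e' ∈ T.blue ∪ T.red → a2 ∈ e' →
        ∃ c, Good H'' c ∧ φ c = q ∧ e' = s(c, a2) := by
      intro e' he' hmem
      have key : ∀ (S : Finset (Sym2 ℕ)), S ⊆ H''.blue ∪ H''.red →
          e' ∈ S.image (ren a r) → ∃ c, Good H'' c ∧ φ c = q ∧ e' = s(c, a2) := by
        intro S hS hmem'
        rcases ren_image_elim H'' a a1 a2 hS r hr hmem' with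
          ⟨heS, _⟩ | ⟨d, hda, hdv, hed, heq⟩
        · exfalso
          rcases Finset.mem_union.mp (hS heS) with h | h
          · exact h2 (H''.blue_mem _ h a2 hmem)
          · exact h2 (H''.red_mem _ h a2 hmem)
        · refine ⟨d, ?_, ?_, ?_⟩
          all_goals {
            have hrd2 : r d = a2 := by
              rw [heq] at hmem
              rcases Sym2.mem_iff.mp hmem with hh | hh
              · exact absurd (hh ▸ hdv) h2
              · exact hh.symm
            have hcond : Good H'' d ∧ φ d = q := by
              by_contra hc
              rw [hrdef] at hrd2; dsimp only at hrd2
              rw [if_neg hc] at hrd2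
              exact h12 hrd2
            first
              | exact hcond.1
              | exact hcond.2
              | (rw [heq, hrd2]) }
      rcases Finset.mem_union.mp he' with h | h
      · exact key H''.blue Finset.subset_union_left h
      · exact key H''.red Finset.subset_union_right h
    have hga2 : ¬ Good T a2 := by
      rintro ⟨e1, he1, e2, he2, hne', hm1, hm2⟩
      obtain ⟨c1, hg1, hq1, hq1'⟩ := hat2 e1 he1 hm1
      obtain ⟨c2, hg2, hq2, hq2'⟩ := hat2 e2 he2 hm2
      have : c1 = c2 := hinj hg1 hg2 (hq1.trans hq2.symm)
      exact hne' (by rw [hq1', hq2', this])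
    refine ⟨ψ, T, permSplit_splitICG hr hr h1 h2 hav h12, ?_, ?_, ?_, ?_, ?_⟩
    · intro _
      exact ⟨a1, Finset.mem_insert_self _ _⟩
    · intro b hgb
      rw [hverts]
      by_cases hb1 : b = a1
      · rw [hb1, hψa1]; exact hp
      · by_cases hb2 : b = a2
        · exact absurd (hb2 ▸ hgb) hga2
        · obtain ⟨hg'', _⟩ := hgd b hgb hb1 hb2
          rw [hψo b hb1 hb2]
          exact hin b hg''
    · intro x hx y hy hxy
      simp only [Set.mem_setOf_eq] at hx hy
      by_cases hx2 : x = a2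
      · exact absurd (hx2 ▸ hx) hga2
      by_cases hy2 : y = a2
      · exact absurd (hy2 ▸ hy) hga2
      by_cases hx1 : x = a1
      · by_cases hy1 : y = a1
        · rw [hx1, hy1]
        · exfalso
          obtain ⟨hgy, hya⟩ := hgd y hy hy1 hy2
          rw [hx1, hψa1, hψo y hy1 hy2] at hxy
          exact hya (hinj hgy hga (hxy.symm.trans hφa.symm))
      · by_cases hy1 : y = a1
        · exfalso
          obtain ⟨hgx, hxa⟩ := hgd x hx hx1 hx2
          rw [hy1, hψa1, hψo x hx1 hx2] at hxy
          exact hxa (hinj hgx hga (hxy.trans hφa.symm))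
        · obtain ⟨hgx, _⟩ := hgd x hx hx1 hx2
          obtain ⟨hgy, _⟩ := hgd y hy hy1 hy2
          rw [hψo x hx1 hx2, hψo y hy1 hy2] at hxy
          exact hinj hgx hgy hxy
    · have hcopy : ∀ b c, Good T b → Good T c → b ≠ a1 → b ≠ a2 → (c = a1 ∨ c = a2) →
          s(b, a) ∈ H''.blue → r b = c → s(ψ b, ψ c) ∈ H'.blue := by
        intro b c hgb hgc hb1 hb2 hcc hm hrc
        rcases hcc with hcc | hcc
        swap
        · exact absurd (hcc ▸ hgc) hga2
        obtain ⟨hgb'', hba⟩ := hgd b hgb hb1 hb2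
        rw [hcc] at hrc
        have hbq : φ b ≠ q := by
          intro hh
          rw [hrdef] at hrc; dsimp only at hrc
          rw [if_pos ⟨hgb'', hh⟩] at hrc
          exact h12 hrc.symm
        have hHb : s(φ b, p) ∈ H.blue := by
          have := hB b a hgb'' hga hm
          rwa [hφa] at this
        have hneq : s(φ b, p) ≠ s(p, q) := by
          intro hh
          rcases Sym2.eq_iff.mp hh with ⟨h1', h2'⟩ | ⟨h1', h2'⟩
          · exact hpq h2'
          · exact hbq h1'
        rw [hψo b hb1 hb2, hcc, hψa1]
        exact hpresB _ hHb hneq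
      intro b c hgb hgc hbc
      have hbc' : s(b, c) ∈ H''.blue.image (ren a r) := hbc
      rcases mem_split_elim h1 h2 Finset.subset_union_left hr hav hbc' with
        ⟨hb1, hb2, hc1, hc2, hm⟩ | ⟨hb1, hb2, hcc, hm, hrc⟩ | ⟨hc1, hc2, hbb, hm, hrc⟩
      · obtain ⟨hgb'', hba⟩ := hgd b hgb hb1 hb2
        obtain ⟨hgc'', hca⟩ := hgd c hgc hc1 hc2
        have hHb := hB b c hgb'' hgc'' hm
        have hneq : s(φ b, φ c) ≠ s(p, q) := by
          intro hh
          rcases Sym2.eq_iff.mp hh with ⟨h1', _⟩ | ⟨_, h2'⟩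
          · exact hba (hinj hgb'' hga (h1'.trans hφa.symm))
          · exact hca (hinj hgc'' hga (h2'.trans hφa.symm))
        rw [hψo b hb1 hb2, hψo c hc1 hc2]
        exact hpresB _ hHb hneq
      · exact hcopy b c hgb hgc hb1 hb2 hcc hm hrc
      · rw [Sym2.eq_swap]
        exact hcopy c b hgc hgb hc1 hc2 hbb hm hrc
    · have hcopy : ∀ b c, Good T b → Good T c → b ≠ a1 → b ≠ a2 → (c = a1 ∨ c = a2) →
          s(b, a) ∈ H''.red → r b = c → s(ψ b, ψ c) ∈ H'.red := by
        intro b c hgb hgc hb1 hb2 hcc hm hrc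
        rcases hcc with hcc | hcc
        swap
        · exact absurd (hcc ▸ hgc) hga2
        obtain ⟨hgb'', hba⟩ := hgd b hgb hb1 hb2
        rw [hcc] at hrc
        have hbq : φ b ≠ q := by
          intro hh
          rw [hrdef] at hrc; dsimp only at hrc
          rw [if_pos ⟨hgb'', hh⟩] at hrc
          exact h12 hrc.symm
        have hHb : s(φ b, p) ∈ H.red := by
          have := hR b a hgb'' hga hm
          rwa [hφa] at this
        have hneq : s(φ b, p) ≠ s(p, q) := by
          intro hh
          rcases Sym2.eq_iff.mp hh with ⟨h1', h2'⟩ | ⟨h1', h2'⟩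
          · exact hpq h2'
          · exact hbq h1'
        rw [hψo b hb1 hb2, hcc, hψa1]
        exact hpresR _ hHb hneq
      intro b c hgb hgc hbc
      have hbc' : s(b, c) ∈ H''.red.image (ren a r) := hbc
      rcases mem_split_elim h1 h2 Finset.subset_union_right hr hav hbc' with
        ⟨hb1, hb2, hc1, hc2, hm⟩ | ⟨hb1, hb2, hcc, hm, hrc⟩ | ⟨hc1, hc2, hbb, hm, hrc⟩
      · obtain ⟨hgb'', hba⟩ := hgd b hgb hb1 hb2
        obtain ⟨hgc'', hca⟩ := hgd c hgc hc1 hc2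
        have hHb := hR b c hgb'' hgc'' hm
        have hneq : s(φ b, φ c) ≠ s(p, q) := by
          intro hh
          rcases Sym2.eq_iff.mp hh with ⟨h1', _⟩ | ⟨_, h2'⟩
          · exact hba (hinj hgb'' hga (h1'.trans hφa.symm))
          · exact hca (hinj hgc'' hga (h2'.trans hφa.symm))
        rw [hψo b hb1 hb2, hψo c hc1 hc2]
        exact hpresR _ hHb hneq
      · exact hcopy b c hgb hgc hb1 hb2 hcc hm hrc
      · rw [Sym2.eq_swap]
        exact hcopy c b hgc hgb hc1 hc2 hbb hm hrc
  · -- Case B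
    obtain ⟨a, hav⟩ := hne ⟨p, hp⟩
    set rB : ℕ → ℕ := fun _ => a1 with hrBdef
    have hrB : ∀ c, rB c = a1 ∨ rB c = a2 := fun _ => Or.inl rfl
    set T := splitICG H'' a a1 a2 rB rB hrB hrB h1 h2 with hTdef
    set ψ : ℕ → ℕ := fun x => if x = a1 then φ a else if x = a2 then φ a else φ x with hψdef
    have hnotaT : a ∉ T.verts := a_not_in_split hrB hrB h1 h2 hav
    have hgd : ∀ b, Good T b → b ≠ a1 → b ≠ a2 → Good H'' b ∧ b ≠ a := by
      intro b hg hb1 hb2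
      refine ⟨good_down hrB hrB h1 h2 hb1 hb2 hg, ?_⟩
      intro hh
      exact hnotaT (hh ▸ good_mem_verts T hg)
    have hnogp : ∀ b, Good H'' b → φ b ≠ p := fun b hg hh => hA ⟨b, hg, hh⟩
    have hψa1 : ψ a1 = φ a := by simp [hψdef]
    have hψa2 : ψ a2 = φ a := by simp [hψdef, Ne.symm h12, h12]
    have hψo : ∀ b, b ≠ a1 → b ≠ a2 → ψ b = φ b := by
      intro b hb1 hb2; rw [hψdef]; simp [hb1, hb2]
    have hno2 : ∀ e', e' ∈ T.blue ∪ T.red → a2 ∉ e' := by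
      intro e' he' hmem
      rcases Finset.mem_union.mp he' with h | h
      · rcases ren_image_elim H'' a a1 a2 Finset.subset_union_left rB hrB h with
          ⟨he, _⟩ | ⟨d, hda, hdv, hed, heq⟩
        · exact h2 (H''.blue_mem _ he a2 hmem)
        · rw [heq] at hmem
          rcases Sym2.mem_iff.mp hmem with hh | hh
          · exact h2 (hh ▸ hdv)
          · exact h12 hh.symm
      · rcases ren_image_elim H'' a a1 a2 Finset.subset_union_right rB hrB h with
          ⟨he, _⟩ | ⟨d, hda, hdv, hed, heq⟩
        · exact h2 (H''.red_mem _ he a2 hmem)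
        · rw [heq] at hmem
          rcases Sym2.mem_iff.mp hmem with hh | hh
          · exact h2 (hh ▸ hdv)
          · exact h12 hh.symm
    have hga2 : ¬ Good T a2 := by
      rintro ⟨e1, he1, _, _, _, hm1, _⟩
      exact hno2 e1 he1 hm1
    have hga1 : Good T a1 → Good H'' a := fun hg => good_copy hrB hrB h1 h2 (Or.inl rfl) hg
    have hneqgen : ∀ b c, Good H'' b → Good H'' c → s(φ b, φ c) ≠ s(p, q) := by
      intro b c hgb hgc hh
      rcases Sym2.eq_iff.mp hh with ⟨h1', _⟩ | ⟨_, h2'⟩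
      · exact hnogp b hgb h1'
      · exact hnogp c hgc h2'
    refine ⟨ψ, T, permSplit_splitICG hrB hrB h1 h2 hav h12, ?_, ?_, ?_, ?_, ?_⟩
    · intro _
      exact ⟨a1, Finset.mem_insert_self _ _⟩
    · intro b hgb
      rw [hverts]
      by_cases hb1 : b = a1
      · rw [hb1, hψa1]
        exact hin a (hga1 (hb1 ▸ hgb))
      · by_cases hb2 : b = a2
        · exact absurd (hb2 ▸ hgb) hga2
        · obtain ⟨hg'', _⟩ := hgd b hgb hb1 hb2
          rw [hψo b hb1 hb2]
          exact hin b hg''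
    · intro x hx y hy hxy
      simp only [Set.mem_setOf_eq] at hx hy
      by_cases hx2 : x = a2
      · exact absurd (hx2 ▸ hx) hga2
      by_cases hy2 : y = a2
      · exact absurd (hy2 ▸ hy) hga2
      by_cases hx1 : x = a1
      · by_cases hy1 : y = a1
        · rw [hx1, hy1]
        · exfalso
          obtain ⟨hgy, hya⟩ := hgd y hy hy1 hy2
          rw [hx1, hψa1, hψo y hy1 hy2] at hxy
          exact hya (hinj hgy (hga1 (hx1 ▸ hx)) hxy.symm)
      · by_cases hy1 : y = a1
        · exfalso
          obtain ⟨hgx, hxa⟩ := hgd x hx hx1 hx2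
          rw [hy1, hψa1, hψo x hx1 hx2] at hxy
          exact hxa (hinj hgx (hga1 (hy1 ▸ hy)) hxy)
        · obtain ⟨hgx, _⟩ := hgd x hx hx1 hx2
          obtain ⟨hgy, _⟩ := hgd y hy hy1 hy2
          rw [hψo x hx1 hx2, hψo y hy1 hy2] at hxy
          exact hinj hgx hgy hxy
    · intro b c hgb hgc hbc
      have hbc' : s(b, c) ∈ H''.blue.image (ren a rB) := hbc
      rcases mem_split_elim h1 h2 Finset.subset_union_left hrB hav hbc' with
        ⟨hb1, hb2, hc1, hc2, hm⟩ | ⟨hb1, hb2, hcc, hm, hrc⟩ | ⟨hc1, hc2, hbb, hm, hrc⟩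
      · obtain ⟨hgb'', _⟩ := hgd b hgb hb1 hb2
        obtain ⟨hgc'', _⟩ := hgd c hgc hc1 hc2
        rw [hψo b hb1 hb2, hψo c hc1 hc2]
        exact hpresB _ (hB b c hgb'' hgc'' hm) (hneqgen b c hgb'' hgc'')
      · rcases hcc with hcc | hcc
        swap
        · exact absurd (hcc ▸ hgc) hga2
        obtain ⟨hgb'', _⟩ := hgd b hgb hb1 hb2
        have hga'' : Good H'' a := hga1 (hcc ▸ hgc)
        rw [hψo b hb1 hb2, hcc, hψa1]
        exact hpresB _ (hB b a hgb'' hga'' hm) (hneqgen b a hgb'' hga'')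
      · rcases hbb with hbb | hbb
        swap
        · exact absurd (hbb ▸ hgb) hga2
        obtain ⟨hgc'', _⟩ := hgd c hgc hc1 hc2
        have hga'' : Good H'' a := hga1 (hbb ▸ hgb)
        rw [Sym2.eq_swap, hψo c hc1 hc2, hbb, hψa1]
        exact hpresB _ (hB c a hgc'' hga'' hm) (hneqgen c a hgc'' hga'')
    · intro b c hgb hgc hbc
      have hbc' : s(b, c) ∈ H''.red.image (ren a rB) := hbc
      rcases mem_split_elim h1 h2 Finset.subset_union_right hrB hav hbc' with
        ⟨hb1, hb2, hc1, hc2, hm⟩ | ⟨hb1, hb2, hcc, hm, hrc⟩ | ⟨hc1, hc2, hbb, hm, hrc⟩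
      · obtain ⟨hgb'', _⟩ := hgd b hgb hb1 hb2
        obtain ⟨hgc'', _⟩ := hgd c hgc hc1 hc2
        rw [hψo b hb1 hb2, hψo c hc1 hc2]
        exact hpresR _ (hR b c hgb'' hgc'' hm) (hneqgen b c hgb'' hgc'')
      · rcases hcc with hcc | hcc
        swap
        · exact absurd (hcc ▸ hgc) hga2
        obtain ⟨hgb'', _⟩ := hgd b hgb hb1 hb2
        have hga'' : Good H'' a := hga1 (hcc ▸ hgc)
        rw [hψo b hb1 hb2, hcc, hψa1]
        exact hpresR _ (hR b a hgb'' hga'' hm) (hneqgen b a hgb'' hga'')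
      · rcases hbb with hbb | hbb
        swap
        · exact absurd (hbb ▸ hgb) hga2
        obtain ⟨hgc'', _⟩ := hgd c hgc hc1 hc2
        have hga'' : Good H'' a := hga1 (hbb ▸ hgb)
        rw [Sym2.eq_swap, hψo c hc1 hc2, hbb, hψa1]
        exact hpresR _ (hR c a hgc'' hga'' hm) (hneqgen c a hgc'' hga'')

lemma relf_refl (G : ICG) : RelF id G G := by
  refine ⟨fun h => h, fun b hg => good_mem_verts G hg, fun x _ y _ hxy => hxy, ?_, ?_⟩
  · intro b c _ _ hm; exact hm
  · intro b c _ _ hm; exact hm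

theorem stmt1 (G : ICG) (k : ℕ)
    (h : ∃ G', MixedSeq k G G' ∧ ¬ HasErrCycle G') :
    ∃ G', Splits k G G' ∧ ¬ HasErrCycle G' := by
  obtain ⟨G', ⟨f, hf0, hfk, hstep⟩, hnc⟩ := h
  have key : ∀ n, n ≤ k → ∃ (g : ℕ → ICG) (ψ : ℕ → ℕ), g 0 = G ∧
      (∀ i < n, PermSplit (g i) (g (i + 1))) ∧ RelF ψ (f n) (g n) := by
    intro n
    induction n with
    | zero =>
      intro _
      exact ⟨fun _ => G, id, rfl, fun i hi => absurd hi (by omega), by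
        rw [hf0]; exact relf_refl G⟩
    | succ n ih =>
      intro hn
      obtain ⟨g, ψ, hg0, hsteps, hrel⟩ := ih (by omega)
      have hex : ∃ ψ' H''', PermSplit (g n) H''' ∧ RelF ψ' (f (n + 1)) H''' := by
        rcases hstep n (by omega) with hop | hop
        · exact step_recolor hrel hop
        · exact step_split hrel hop
      obtain ⟨ψ', H''', hps, hrel'⟩ := hex
      refine ⟨fun i => if i = n + 1 then H''' else g i, ψ', ?_, ?_, ?_⟩
      · show (if 0 = n + 1 then H''' else g 0) = G
        rw [if_neg (by omega : ¬(0 = n + 1))]; exact hg0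
      · intro i hi
        show PermSplit (if i = n + 1 then H''' else g i) (if i + 1 = n + 1 then H''' else g (i + 1))
        by_cases hin : i = n
        · subst hin
          rw [if_neg (by omega : ¬(i = i + 1)), if_pos rfl]
          exact hps
        · rw [if_neg (by omega : ¬(i = n + 1)), if_neg (by omega : ¬(i + 1 = n + 1))]
          exact hsteps i (by omega)
      · show RelF ψ' (f (n + 1)) (if n + 1 = n + 1 then H''' else g (n + 1))
        rw [if_pos rfl]
        exact hrel'
  obtain ⟨g, ψ, hg0, hsteps, hrel⟩ := key k le_rfl
  refine ⟨g k, ⟨g, hg0, rfl, hsteps⟩, ?_⟩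
  intro hcyc
  apply hnc
  rw [← hfk]
  exact hasErr_transfer hrel hcyc
end

section
/- Let G = (V, B, R) be an incomplete correlation graph and k ≥ 0 an integer. Let H = (V, E') be the simple graph with E' = B, and let S = R be the set of terminal pairs. Then G can be clustered by a sequence of at most k permissive vertex splits if and only if the Multicut with Vertex Splitting instance (H, S, k) admits a sequence of at most k exclusive vertex splits separating every surviving terminal pair. -/
structure SG where
  verts : Finset ℕ
  edges : Finset (Sym2 ℕ)
  edges_mem : ∀ e ∈ edges, ∀ x ∈ e, x ∈ verts
  edges_nd : ∀ e ∈ edges, ¬ e.IsDiag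

/-- One exclusive vertex split, on a state consisting of the current graph together
with the set of vertex names used so far (to guarantee freshness of new vertices). -/
def ExclStep (p q : SG × Finset ℕ) : Prop :=
  ∃ v v1 v2 : ℕ, v ∈ p.1.verts ∧ v1 ∉ p.2 ∧ v2 ∉ p.2 ∧ v1 ∉ p.1.verts ∧ v2 ∉ p.1.verts ∧
    v1 ≠ v2 ∧
    q.2 = insert v1 (insert v2 p.2) ∧
    q.1.verts = insert v1 (insert v2 (p.1.verts.erase v)) ∧
    (∀ u w : ℕ, u ≠ v → w ≠ v → u ≠ v1 → u ≠ v2 → w ≠ v1 → w ≠ v2 →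
      (s(u,w) ∈ p.1.edges ↔ s(u,w) ∈ q.1.edges)) ∧
    (∀ u : ℕ, s(u,v) ∈ p.1.edges ↔ (s(u,v1) ∈ q.1.edges ∨ s(u,v2) ∈ q.1.edges)) ∧
    (∀ u : ℕ, ¬ (s(u,v1) ∈ q.1.edges ∧ s(u,v2) ∈ q.1.edges))

def Reach (H : SG) (x y : ℕ) : Prop :=
  Relation.ReflTransGen (fun a b => s(a,b) ∈ H.edges) x y

/-- A solution of the Multicut with Vertex Splitting instance `(H, S, k)`:
a sequence of at most `k` exclusive vertex splits after which every terminal pair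
both of whose endpoints are unsplit (i.e., still present) lies in different
connected components. -/
def MCSolution (H : SG) (S : Finset (Sym2 ℕ)) (k : ℕ) : Prop :=
  ∃ (n : ℕ) (f : ℕ → SG × Finset ℕ), n ≤ k ∧ f 0 = (H, H.verts) ∧
    (∀ i < n, ExclStep (f i) (f (i+1))) ∧
    ∀ e ∈ S, ∀ x y : ℕ, e = s(x,y) →
      x ∈ (f n).1.verts → y ∈ (f n).1.verts → ¬ Reach (f n).1 x y

set_option linter.unusedSectionVars false
set_option linter.unusedVariables false
set_option maxHeartbeats 1000000

open Finset

lemma chain_rtg {r : ℕ → ℕ → Prop} :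
    ∀ (l : List ℕ) (u v : ℕ), l.Chain' r → l.head? = some u → l.getLast? = some v →
      Relation.ReflTransGen r u v
  | [], u, v, _, h, _ => by simp at h
  | [a], u, v, _, hh, hl => by
      have h1 : a = u := by simpa using hh
      have h2 : a = v := by simpa using hl
      subst h1; subst h2; exact Relation.ReflTransGen.refl
  | a :: b :: t, u, v, hc, hh, hl => by
      have h1 : a = u := by simpa using hh
      subst h1
      have h2 : r a b := (List.isChain_cons_cons.mp hc).1
      have h3 : Relation.ReflTransGen r b v :=
        chain_rtg (b :: t) b v (List.isChain_cons_cons.mp hc).2 rfl (by simpa using hl)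
      exact Relation.ReflTransGen.head h2 h3

lemma rtg_path {r : ℕ → ℕ → Prop} {u v : ℕ} (h : Relation.ReflTransGen r u v) :
    ∃ l : List ℕ, l.Nodup ∧ l.Chain' r ∧ l.head? = some u ∧ l.getLast? = some v := by
  induction h with
  | refl => exact ⟨[u], by simp [List.Chain', List.isChain_singleton]⟩
  | @tail b c _ hbc ih =>
      obtain ⟨l, nd, ch, hh, hl⟩ := ih
      by_cases hcl : c ∈ l
      · obtain ⟨l1, l2, rfl⟩ := List.append_of_mem hcl
        have hsub : l1 ++ [c] <+: l1 ++ c :: l2 := ⟨l2, by simp⟩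
        refine ⟨l1 ++ [c], nd.sublist hsub.sublist, ch.prefix hsub, ?_, by simp⟩
        cases l1 with
        | nil => simpa using hh
        | cons x xs => simpa using hh
      · refine ⟨l ++ [c], by simp [List.nodup_append, nd, hcl]; rintro a ha rfl; exact hcl ha, ?_, ?_, by simp⟩
        · simp only [List.Chain']; rw [List.isChain_append]
          refine ⟨ch, by simp, ?_⟩
          intro x hx y hy
          simp at hy; subst hy
          rw [hl] at hx; simp at hx; subst hx; exact hbc
        · cases l with
          | nil => simp at hl
          | cons x xs => simpa using hh

structure PS (a b : ICG) (v v1 v2 : ℕ) : Prop where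
  hv : v ∈ a.verts
  h1 : v1 ∉ a.verts
  h2 : v2 ∉ a.verts
  h12 : v1 ≠ v2
  hverts : b.verts = insert v1 (insert v2 (a.verts.erase v))
  hkeep : ∀ u w : ℕ, u ≠ v → w ≠ v → u ≠ v1 → u ≠ v2 → w ≠ v1 → w ≠ v2 →
      ((s(u,w) ∈ a.blue ↔ s(u,w) ∈ b.blue) ∧ (s(u,w) ∈ a.red ↔ s(u,w) ∈ b.red))
  hblue : ∀ u : ℕ, s(u,v) ∈ a.blue → s(u,v1) ∈ b.blue ∨ s(u,v2) ∈ b.blue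
  hred : ∀ u : ℕ, s(u,v) ∈ a.red → s(u,v1) ∈ b.red ∨ s(u,v2) ∈ b.red

lemma permSplit_iff {a b : ICG} : PermSplit a b ↔ ∃ v v1 v2, PS a b v v1 v2 := by
  constructor
  · rintro ⟨v, v1, v2, h1, h2, h3, h4, h5, h6, h7, h8⟩
    exact ⟨v, v1, v2, h1, h2, h3, h4, h5, h6, h7, h8⟩
  · rintro ⟨v, v1, v2, h⟩
    exact ⟨v, v1, v2, h.hv, h.h1, h.h2, h.h12, h.hverts, h.hkeep, h.hblue, h.hred⟩

structure ES (pp qq : SG × Finset ℕ) (v v1 v2 : ℕ) : Prop where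
  hv : v ∈ pp.1.verts
  hu1 : v1 ∉ pp.2
  hu2 : v2 ∉ pp.2
  hw1 : v1 ∉ pp.1.verts
  hw2 : v2 ∉ pp.1.verts
  h12 : v1 ≠ v2
  hused : qq.2 = insert v1 (insert v2 pp.2)
  hverts : qq.1.verts = insert v1 (insert v2 (pp.1.verts.erase v))
  hkeep : ∀ u w : ℕ, u ≠ v → w ≠ v → u ≠ v1 → u ≠ v2 → w ≠ v1 → w ≠ v2 →
      (s(u,w) ∈ pp.1.edges ↔ s(u,w) ∈ qq.1.edges)
  hsplit : ∀ u : ℕ, s(u,v) ∈ pp.1.edges ↔ (s(u,v1) ∈ qq.1.edges ∨ s(u,v2) ∈ qq.1.edges)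
  hexcl : ∀ u : ℕ, ¬ (s(u,v1) ∈ qq.1.edges ∧ s(u,v2) ∈ qq.1.edges)

lemma exclStep_iff {a b : SG × Finset ℕ} : ExclStep a b ↔ ∃ v v1 v2, ES a b v v1 v2 := by
  constructor
  · rintro ⟨v, v1, v2, h1, h2, h3, h4, h5, h6, h7, h8, h9, h10, h11⟩
    exact ⟨v, v1, v2, h1, h2, h3, h4, h5, h6, h7, h8, h9, h10, h11⟩
  · rintro ⟨v, v1, v2, h⟩
    exact ⟨v, v1, v2, h.hv, h.hu1, h.hu2, h.hw1, h.hw2, h.h12, h.hused, h.hverts,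
      h.hkeep, h.hsplit, h.hexcl⟩


lemma SG.ext' (a b : SG) (h1 : a.verts = b.verts) (h2 : a.edges = b.edges) : a = b := by
  cases a; cases b; simp_all

lemma ICG.ext' (a b : ICG) (h1 : a.verts = b.verts) (h2 : a.blue = b.blue)
    (h3 : a.red = b.red) : a = b := by
  cases a; cases b; simp_all



section Forward

variable (p : ℕ → ICG) (v v1 v2 : ℕ → ℕ) (N : ℕ) (V0 : Finset ℕ) (E0 : Finset (Sym2 ℕ))

def phi : ℕ → ℕ → ℕ
  | 0 => fun x => x
  | t+1 => fun x =>
      if x = v1 t then N + 2*t else if x = v2 t then N + 2*t + 1 else phi t x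

def EV : ℕ → Finset ℕ
  | 0 => V0
  | t+1 => insert (N + 2*t) (insert (N + 2*t + 1) ((EV t).erase (phi v1 v2 N t (v t))))

open Classical in
noncomputable def EE : ℕ → Finset (Sym2 ℕ)
  | 0 => E0
  | t+1 =>
      ((EE t).filter (fun e => phi v1 v2 N t (v t) ∉ e)) ∪
      (((p t).verts.filter (fun x =>
          s(phi v1 v2 N t x, phi v1 v2 N t (v t)) ∈ EE t ∧ s(x, v1 t) ∈ (p (t+1)).blue)).image
        (fun x => s(phi v1 v2 N t x, N + 2*t))) ∪
      (((p t).verts.filter (fun x =>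
          s(phi v1 v2 N t x, phi v1 v2 N t (v t)) ∈ EE t ∧ s(x, v1 t) ∉ (p (t+1)).blue)).image
        (fun x => s(phi v1 v2 N t x, N + 2*t + 1)))

def UU : ℕ → Finset ℕ := fun t => V0 ∪ (Finset.range (2*t)).image (fun j => N + j)

def FInv (t : ℕ) : Prop :=
  EV v v1 v2 N V0 t = (p t).verts.image (phi v1 v2 N t) ∧
  (∀ x ∈ (p t).verts, ∀ y ∈ (p t).verts, phi v1 v2 N t x = phi v1 v2 N t y → x = y) ∧
  (∀ e ∈ EE p v v1 v2 N E0 t, ∃ x, x ∈ (p t).verts ∧ ∃ y, y ∈ (p t).verts ∧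
      e = s(phi v1 v2 N t x, phi v1 v2 N t y) ∧ s(x,y) ∈ (p t).blue) ∧
  (∀ x ∈ (p t).verts, phi v1 v2 N t x < N + 2*t) ∧
  (∀ x : ℕ, phi v1 v2 N t x = x ∨ N ≤ phi v1 v2 N t x)

variable {p v v1 v2 N V0 E0}

lemma finv_mem {t : ℕ} (h : FInv p v v1 v2 N V0 E0 t) :
    ∀ e ∈ EE p v v1 v2 N E0 t, ∀ z ∈ e, z ∈ EV v v1 v2 N V0 t := by
  obtain ⟨h1, _, h3, _, _⟩ := h
  intro e he z hz
  obtain ⟨x, hx, y, hy, rfl, _⟩ := h3 e he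
  rw [h1]
  rcases Sym2.mem_iff.mp hz with rfl | rfl
  · exact mem_image_of_mem _ hx
  · exact mem_image_of_mem _ hy

lemma finv_nd {t : ℕ} (h : FInv p v v1 v2 N V0 E0 t) :
    ∀ e ∈ EE p v v1 v2 N E0 t, ¬ e.IsDiag := by
  obtain ⟨_, h2, h3, _, _⟩ := h
  intro e he hd
  obtain ⟨x, hx, y, hy, rfl, hb⟩ := h3 e he
  rw [Sym2.mk_isDiag_iff] at hd
  exact (p t).blue_nd _ hb (by rw [Sym2.mk_isDiag_iff]; exact h2 x hx y hy hd)

lemma finv_lt {t : ℕ} (h : FInv p v v1 v2 N V0 E0 t) :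
    ∀ e ∈ EE p v v1 v2 N E0 t, ∀ z ∈ e, z < N + 2*t := by
  obtain ⟨_, _, h3, h4, _⟩ := h
  intro e he z hz
  obtain ⟨x, hx, y, hy, rfl, _⟩ := h3 e he
  rcases Sym2.mem_iff.mp hz with rfl | rfl
  · exact h4 x hx
  · exact h4 y hy

section

variable {n : ℕ} (hps : ∀ i < n, PS (p i) (p (i+1)) (v i) (v1 i) (v2 i))
  (hbd : ∀ t ≤ n, ∀ x ∈ (p t).verts, x < N)
  (hV0 : V0 = (p 0).verts) (hE0 : E0 = (p 0).blue)

include hps hbd hV0 hE0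

lemma finv_all : ∀ t, t ≤ n → FInv p v v1 v2 N V0 E0 t := by
  intro t
  induction t with
  | zero =>
      intro _
      refine ⟨?_, ?_, ?_, ?_, ?_⟩
      · simp [EV, phi, hV0, Finset.image_id]
      · intro x _ y _ h; simpa [phi] using h
      · intro e he
        rw [show EE p v v1 v2 N E0 0 = E0 from rfl, hE0] at he
        induction e with
        | _ x y =>
          exact ⟨x, (p 0).blue_mem _ he x (by simp), y, (p 0).blue_mem _ he y (by simp),
            by simp [phi], he⟩
      · intro x hx
        have := hbd 0 (Nat.zero_le n) x hx
        simp [phi]; omega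
      · intro x; left; simp [phi]
  | succ t IH =>
      intro ht
      have htn : t < n := ht
      have IH' := IH (Nat.le_of_lt htn)
      obtain ⟨hEV, hinj, hpre, hlt, hfix⟩ := IH'
      have S := hps t htn
      -- basic facts
      have hA1 : ∀ x ∈ (p t).verts, phi v1 v2 N (t+1) x = phi v1 v2 N t x := by
        intro x hx
        have hx1 : x ≠ v1 t := fun h => S.h1 (h ▸ hx)
        have hx2 : x ≠ v2 t := fun h => S.h2 (h ▸ hx)
        simp [phi, hx1, hx2]
      have hA2 : phi v1 v2 N (t+1) (v1 t) = N + 2*t := by simp [phi]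
      have hA3 : phi v1 v2 N (t+1) (v2 t) = N + 2*t + 1 := by
        simp [phi, Ne.symm S.h12, S.h12]
      have hmem' : ∀ x, x ∈ (p (t+1)).verts ↔
          (x = v1 t ∨ x = v2 t ∨ (x ∈ (p t).verts ∧ x ≠ v t)) := by
        intro x
        rw [S.hverts]
        simp [Finset.mem_insert, Finset.mem_erase, and_comm]
      -- A6': preimages of edges at the split vertex
      have hA6 : ∀ u : ℕ, s(u, phi v1 v2 N t (v t)) ∈ EE p v v1 v2 N E0 t →
          ∃ x, x ∈ (p t).verts ∧ phi v1 v2 N t x = u ∧ x ≠ v t ∧ s(x, v t) ∈ (p t).blue := by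
        intro u he
        obtain ⟨a, ha, b, hb, heq, hblue⟩ := hpre _ he
        rcases Sym2.eq_iff.mp heq.symm with ⟨h1, h2⟩ | ⟨h1, h2⟩
        · have hb' : b = v t := hinj b hb (v t) S.hv h2
          rw [hb'] at hblue
          have : a ≠ v t := fun h => (p t).blue_nd _ hblue (by rw [Sym2.mk_isDiag_iff]; exact h)
          exact ⟨a, ha, h1, this, hblue⟩
        · have ha' : a = v t := hinj a ha (v t) S.hv h1
          rw [ha', Sym2.eq_swap] at hblue
          have hnd : b ≠ v t := fun h => (p t).blue_nd _ hblue (by rw [Sym2.mk_isDiag_iff]; exact h)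
          exact ⟨b, hb, h2, hnd, hblue⟩
      refine ⟨?_, ?_, ?_, ?_, ?_⟩
      · -- EV equality
        show insert (N + 2*t) (insert (N + 2*t + 1) ((EV v v1 v2 N V0 t).erase
            (phi v1 v2 N t (v t)))) = _
        ext z
        simp only [Finset.mem_insert, Finset.mem_erase, Finset.mem_image, hEV]
        constructor
        · rintro (rfl | rfl | ⟨hz, x, hx, rfl⟩)
          · exact ⟨v1 t, (hmem' _).mpr (Or.inl rfl), hA2⟩
          · exact ⟨v2 t, (hmem' _).mpr (Or.inr (Or.inl rfl)), hA3⟩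
          · have hxv : x ≠ v t := fun h => hz (by rw [h])
            exact ⟨x, (hmem' _).mpr (Or.inr (Or.inr ⟨hx, hxv⟩)), hA1 x hx⟩
        · rintro ⟨x, hx, rfl⟩
          rcases (hmem' x).mp hx with rfl | rfl | ⟨hx', hxv⟩
          · left; exact hA2
          · right; left; exact hA3
          · right; right
            rw [hA1 x hx']
            exact ⟨fun h => hxv (hinj x hx' (v t) S.hv h), ⟨x, hx', rfl⟩⟩
      · -- injectivity
        intro x hx y hy hxy
        rcases (hmem' x).mp hx with rfl | rfl | ⟨hx', hxv⟩ <;>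
          rcases (hmem' y).mp hy with rfl | rfl | ⟨hy', hyv⟩
        · rfl
        · rw [hA2, hA3] at hxy; omega
        · rw [hA2, hA1 y hy'] at hxy; have := hlt y hy'; omega
        · rw [hA3, hA2] at hxy; omega
        · rfl
        · rw [hA3, hA1 y hy'] at hxy; have := hlt y hy'; omega
        · rw [hA1 x hx', hA2] at hxy; have := hlt x hx'; omega
        · rw [hA1 x hx', hA3] at hxy; have := hlt x hx'; omega
        · rw [hA1 x hx', hA1 y hy'] at hxy; exact hinj x hx' y hy' hxy
      · -- edge preimages
        intro e he
        simp only [EE, Finset.mem_union, Finset.mem_filter, Finset.mem_image] at he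
        rcases he with (⟨he, hnv⟩ | ⟨x, ⟨hx, hxe, hxb⟩, rfl⟩) | ⟨x, ⟨hx, hxe, hxb⟩, rfl⟩
        · obtain ⟨a, ha, b, hb, rfl, hblue⟩ := hpre _ he
          have hav : a ≠ v t := by
            rintro rfl; exact hnv (by simp)
          have hbv : b ≠ v t := by
            rintro rfl; exact hnv (by simp)
          have ha1 : a ≠ v1 t := fun h => S.h1 (h ▸ ha)
          have ha2 : a ≠ v2 t := fun h => S.h2 (h ▸ ha)
          have hb1 : b ≠ v1 t := fun h => S.h1 (h ▸ hb)
          have hb2 : b ≠ v2 t := fun h => S.h2 (h ▸ hb)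
          refine ⟨a, (hmem' a).mpr (Or.inr (Or.inr ⟨ha, hav⟩)), b,
            (hmem' b).mpr (Or.inr (Or.inr ⟨hb, hbv⟩)), by rw [hA1 a ha, hA1 b hb], ?_⟩
          exact ((S.hkeep a b hav hbv ha1 ha2 hb1 hb2).1).mp hblue
        · obtain ⟨x', hx', hphix, hxv, hxblue⟩ := hA6 _ hxe
          have hxx : x' = x := hinj x' hx' x hx hphix
          subst hxx
          refine ⟨x', (hmem' x').mpr (Or.inr (Or.inr ⟨hx', hxv⟩)), v1 t,
            (hmem' _).mpr (Or.inl rfl), by rw [hA1 x' hx', hA2], hxb⟩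
        · obtain ⟨x', hx', hphix, hxv, hxblue⟩ := hA6 _ hxe
          have hxx : x' = x := hinj x' hx' x hx hphix
          subst hxx
          have := S.hblue x' hxblue
          rcases this with h | h
          · exact absurd h hxb
          · exact ⟨x', (hmem' x').mpr (Or.inr (Or.inr ⟨hx', hxv⟩)), v2 t,
              (hmem' _).mpr (Or.inr (Or.inl rfl)), by rw [hA1 x' hx', hA3], h⟩
      · -- bound
        intro x hx
        rcases (hmem' x).mp hx with rfl | rfl | ⟨hx', _⟩
        · rw [hA2]; omega
        · rw [hA3]; omega
        · rw [hA1 x hx']; have := hlt x hx'; omega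
      · -- fix or large
        intro x
        by_cases h1 : x = v1 t
        · subst h1; rw [hA2]; right; omega
        · by_cases h2 : x = v2 t
          · subst h2; rw [hA3]; right; omega
          · have : phi v1 v2 N (t+1) x = phi v1 v2 N t x := by simp [phi, h1, h2]
            rw [this]; exact hfix x

lemma edge_at_split (t : ℕ) (ht : t < n) {u : ℕ}
    (he : s(u, phi v1 v2 N t (v t)) ∈ EE p v v1 v2 N E0 t) :
    ∃ x, x ∈ (p t).verts ∧ phi v1 v2 N t x = u ∧ x ≠ v t ∧ s(x, v t) ∈ (p t).blue := by
  obtain ⟨hEV, hinj, hpre, hlt, hfix⟩ := finv_all hps hbd hV0 hE0 t (Nat.le_of_lt ht)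
  have S := hps t ht
  obtain ⟨a, ha, b, hb, heq, hblue⟩ := hpre _ he
  rcases Sym2.eq_iff.mp heq.symm with ⟨h1, h2⟩ | ⟨h1, h2⟩
  · have hb' : b = v t := hinj b hb (v t) S.hv h2
    rw [hb'] at hblue
    have : a ≠ v t := fun h => (p t).blue_nd _ hblue (by rw [Sym2.mk_isDiag_iff]; exact h)
    exact ⟨a, ha, h1, this, hblue⟩
  · have ha' : a = v t := hinj a ha (v t) S.hv h1
    rw [ha', Sym2.eq_swap] at hblue
    have hnd : b ≠ v t := fun h => (p t).blue_nd _ hblue (by rw [Sym2.mk_isDiag_iff]; exact h)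
    exact ⟨b, hb, h2, hnd, hblue⟩

lemma step_es (t : ℕ) (ht : t < n) (A B : SG)
    (hA1 : A.verts = EV v v1 v2 N V0 t) (hA2 : A.edges = EE p v v1 v2 N E0 t)
    (hB1 : B.verts = EV v v1 v2 N V0 (t+1)) (hB2 : B.edges = EE p v v1 v2 N E0 (t+1)) :
    ES (A, UU N V0 t) (B, UU N V0 (t+1)) (phi v1 v2 N t (v t)) (N + 2*t) (N + 2*t + 1) := by
  obtain ⟨hEV, hinj, hpre, hlt, hfix⟩ := finv_all hps hbd hV0 hE0 t (Nat.le_of_lt ht)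
  have S := hps t ht
  have hV0N : ∀ z ∈ V0, z < N := by
    intro z hz
    rw [hV0] at hz
    exact hbd 0 (Nat.zero_le n) z hz
  have hEElt : ∀ e ∈ EE p v v1 v2 N E0 t, ∀ z ∈ e, z < N + 2*t :=
    finv_lt ⟨hEV, hinj, hpre, hlt, hfix⟩
  constructor
  case hv =>
    rw [hA1, hEV]; exact mem_image_of_mem _ S.hv
  case hu1 =>
    simp only [UU, mem_union, mem_image, mem_range, not_or]
    constructor
    · intro h; have := hV0N _ h; omega
    · rintro ⟨j, hj, hje⟩; omega
  case hu2 =>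
    simp only [UU, mem_union, mem_image, mem_range, not_or]
    constructor
    · intro h; have := hV0N _ h; omega
    · rintro ⟨j, hj, hje⟩; omega
  case hw1 =>
    rw [hA1, hEV]
    simp only [mem_image, not_exists]
    rintro x ⟨hx, h⟩
    have := hlt x hx; omega
  case hw2 =>
    rw [hA1, hEV]
    simp only [mem_image, not_exists]
    rintro x ⟨hx, h⟩
    have := hlt x hx; omega
  case h12 => omega
  case hused =>
    ext z
    simp only [UU, mem_insert, mem_union, mem_image, mem_range]
    constructor
    · rintro (h | ⟨j, hj, rfl⟩)
      · right; right; left; exact h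
      · rcases Nat.lt_or_ge j (2*t) with hj' | hj'
        · right; right; right; exact ⟨j, hj', rfl⟩
        · have : j = 2*t ∨ j = 2*t + 1 := by omega
          rcases this with rfl | rfl
          · left; rfl
          · right; left; rfl
    · rintro (rfl | rfl | h | ⟨j, hj, rfl⟩)
      · right; exact ⟨2*t, by omega, rfl⟩
      · right; exact ⟨2*t+1, by omega, rfl⟩
      · left; exact h
      · right; exact ⟨j, by omega, rfl⟩
  case hverts =>
    rw [hB1, hA1]; rfl
  case hkeep =>
    intro a b hav hbv ha1 ha2 hb1 hb2
    rw [hA2, hB2]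
    constructor
    · intro h
      simp only [EE, mem_union]
      left; left
      rw [mem_filter]
      refine ⟨h, ?_⟩
      rw [Sym2.mem_iff]
      push_neg
      exact ⟨Ne.symm hav, Ne.symm hbv⟩
    · intro h
      simp only [EE, mem_union, mem_filter, mem_image] at h
      rcases h with (⟨h, _⟩ | ⟨x, _, hx⟩) | ⟨x, _, hx⟩
      · exact h
      · rcases Sym2.eq_iff.mp hx with ⟨_, h2⟩ | ⟨_, h2⟩
        · exact absurd h2.symm hb1
        · exact absurd h2.symm ha1
      · rcases Sym2.eq_iff.mp hx with ⟨_, h2⟩ | ⟨_, h2⟩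
        · exact absurd h2.symm hb2
        · exact absurd h2.symm ha2
  case hsplit =>
    intro u
    rw [hA2, hB2]
    constructor
    · intro h
      obtain ⟨x, hx, hphix, hxv, hxblue⟩ := edge_at_split hps hbd hV0 hE0 t ht h
      by_cases hxb : s(x, v1 t) ∈ (p (t+1)).blue
      · left
        simp only [EE, mem_union, mem_filter, mem_image]
        left; right
        exact ⟨x, ⟨hx, by rwa [hphix], hxb⟩, by rw [hphix]⟩
      · right
        simp only [EE, mem_union, mem_filter, mem_image]
        right
        exact ⟨x, ⟨hx, by rwa [hphix], hxb⟩, by rw [hphix]⟩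
    · intro h
      rcases h with h | h
      · simp only [EE, mem_union, mem_filter, mem_image] at h
        rcases h with (⟨h, _⟩ | ⟨x, ⟨hx, hxe, _⟩, hxeq⟩) | ⟨x, ⟨hx, hxe, _⟩, hxeq⟩
        · have := hEElt _ h (N + 2*t) (by rw [Sym2.mem_iff]; right; rfl)
          omega
        · rcases Sym2.eq_iff.mp hxeq with ⟨h1, _⟩ | ⟨h1, h2⟩
          · rw [h1] at hxe; exact hxe
          · have := hlt x hx; omega
        · rcases Sym2.eq_iff.mp hxeq with ⟨_, h2⟩ | ⟨h1, _⟩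
          · omega
          · have := hlt x hx; omega
      · simp only [EE, mem_union, mem_filter, mem_image] at h
        rcases h with (⟨h, _⟩ | ⟨x, ⟨hx, hxe, _⟩, hxeq⟩) | ⟨x, ⟨hx, hxe, _⟩, hxeq⟩
        · have := hEElt _ h (N + 2*t + 1) (by rw [Sym2.mem_iff]; right; rfl)
          omega
        · rcases Sym2.eq_iff.mp hxeq with ⟨_, h2⟩ | ⟨h1, _⟩
          · omega
          · have := hlt x hx; omega
        · rcases Sym2.eq_iff.mp hxeq with ⟨h1, _⟩ | ⟨h1, h2⟩
          · rw [h1] at hxe; exact hxe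
          · have := hlt x hx; omega
  case hexcl =>
    intro u ⟨h1, h2⟩
    rw [hB2] at h1 h2
    simp only [EE, mem_union, mem_filter, mem_image] at h1 h2
    have hx1 : ∃ x, x ∈ (p t).verts ∧ phi v1 v2 N t x = u ∧ s(x, v1 t) ∈ (p (t+1)).blue := by
      rcases h1 with (⟨h, _⟩ | ⟨x, ⟨hx, hxe, hxb⟩, hxeq⟩) | ⟨x, ⟨hx, _, _⟩, hxeq⟩
      · have := hEElt _ h (N + 2*t) (by rw [Sym2.mem_iff]; right; rfl); omega
      · rcases Sym2.eq_iff.mp hxeq with ⟨hh1, _⟩ | ⟨hh1, _⟩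
        · exact ⟨x, hx, hh1, hxb⟩
        · have := hlt x hx; omega
      · rcases Sym2.eq_iff.mp hxeq with ⟨_, hh2⟩ | ⟨hh1, _⟩
        · omega
        · have := hlt x hx; omega
    have hx2 : ∃ x, x ∈ (p t).verts ∧ phi v1 v2 N t x = u ∧ s(x, v1 t) ∉ (p (t+1)).blue := by
      rcases h2 with (⟨h, _⟩ | ⟨x, ⟨hx, _, _⟩, hxeq⟩) | ⟨x, ⟨hx, hxe, hxb⟩, hxeq⟩
      · have := hEElt _ h (N + 2*t + 1) (by rw [Sym2.mem_iff]; right; rfl); omega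
      · rcases Sym2.eq_iff.mp hxeq with ⟨_, hh2⟩ | ⟨hh1, _⟩
        · omega
        · have := hlt x hx; omega
      · rcases Sym2.eq_iff.mp hxeq with ⟨hh1, _⟩ | ⟨hh1, _⟩
        · exact ⟨x, hx, hh1, hxb⟩
        · have := hlt x hx; omega
    obtain ⟨x1, hx1v, hx1u, hx1b⟩ := hx1
    obtain ⟨x2, hx2v, hx2u, hx2b⟩ := hx2
    have : x1 = x2 := hinj x1 hx1v x2 hx2v (by rw [hx1u, hx2u])
    rw [this] at hx1b
    exact hx2b hx1b

end

end Forward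

lemma forward_main (G : ICG) (k : ℕ) (H : SG)
    (hv : H.verts = G.verts) (he : H.edges = G.blue)
    (h : ∃ n ≤ k, ∃ G', Splits n G G' ∧ ¬ HasErrCycle G') :
    MCSolution H G.red k := by
  obtain ⟨n, hn, G', ⟨pf, hp0, hpn, hsteps⟩, herr⟩ := h
  rw [← hpn] at herr
  have hW : ∀ i, ∃ a b c, i < n → PS (pf i) (pf (i+1)) a b c := by
    intro i
    by_cases hi : i < n
    · obtain ⟨a, b, c, hp⟩ := permSplit_iff.mp (hsteps i hi)
      exact ⟨a, b, c, fun _ => hp⟩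
    · exact ⟨0, 0, 0, fun h' => absurd h' hi⟩
  choose va vb vc hPS0 using hW
  have hPS : ∀ i < n, PS (pf i) (pf (i+1)) (va i) (vb i) (vc i) := fun i hi => hPS0 i hi
  set N : ℕ := ((Finset.range (n+1)).biUnion (fun t => (pf t).verts)).sup id + 1 with hN
  have hbd : ∀ t ≤ n, ∀ x ∈ (pf t).verts, x < N := by
    intro t ht x hx
    have hmem : x ∈ (Finset.range (n+1)).biUnion (fun t => (pf t).verts) :=
      Finset.mem_biUnion.mpr ⟨t, Finset.mem_range.mpr (by omega), hx⟩
    have hle := Finset.le_sup (f := id) hmem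
    simp only [id] at hle
    omega
  have hV0 : H.verts = (pf 0).verts := by rw [hv, hp0]
  have hE0 : H.edges = (pf 0).blue := by rw [he, hp0]
  have inv := finv_all hPS hbd hV0 hE0
  have hmem : ∀ t, t ≤ n → ∀ e ∈ EE pf va vb vc N H.edges t, ∀ z ∈ e,
      z ∈ EV va vb vc N H.verts t := fun t ht => finv_mem (inv t ht)
  have hnd : ∀ t, t ≤ n → ∀ e ∈ EE pf va vb vc N H.edges t, ¬ e.IsDiag :=
    fun t ht => finv_nd (inv t ht)
  refine ⟨n, fun t => if h : t ≤ n then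
      ((⟨EV va vb vc N H.verts t, EE pf va vb vc N H.edges t, hmem t h, hnd t h⟩ : SG),
        UU N H.verts t) else (H, H.verts), hn, ?_, ?_, ?_⟩
  · simp only [dif_pos (Nat.zero_le n)]
    refine Prod.ext ?_ ?_
    · exact SG.ext' _ _ rfl rfl
    · simp [UU]
  · intro i hi
    simp only [dif_pos (show i ≤ n by omega), dif_pos (show i + 1 ≤ n by omega)]
    exact exclStep_iff.mpr ⟨phi vb vc N i (va i), N + 2*i, N + 2*i + 1,
      step_es hPS hbd hV0 hE0 i hi _ _ rfl rfl rfl rfl⟩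
  · intro e hered x y hexy hx hy
    simp only [dif_pos (le_refl n)] at hx hy ⊢
    intro hreach
    have hxG : x ∈ G.verts := G.red_mem e hered x (by rw [hexy]; simp)
    have hyG : y ∈ G.verts := G.red_mem e hered y (by rw [hexy]; simp)
    have hxN : x < N := hbd 0 (Nat.zero_le n) x (by rw [← hp0] at hxG; exact hxG)
    have hyN : y < N := hbd 0 (Nat.zero_le n) y (by rw [← hp0] at hyG; exact hyG)
    have surv : ∀ z, z ∈ EV va vb vc N H.verts n → z < N →
        z ∈ (pf n).verts ∧ phi vb vc N n z = z := by
      intro z hz hzN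
      obtain ⟨hEV, hinj, hpre, hlt, hfix⟩ := inv n le_rfl
      rw [hEV] at hz
      obtain ⟨w, hw, hwz⟩ := Finset.mem_image.mp hz
      rcases hfix w with hfw | hfw
      · have hwzeq : w = z := by rw [hfw] at hwz; exact hwz
        subst hwzeq
        exact ⟨hw, hfw⟩
      · rw [hwz] at hfw; omega
    have down : ∀ t, t < n → ∀ z, z < N → z ∈ (pf (t+1)).verts →
        phi vb vc N (t+1) z = z →
        z ∈ (pf t).verts ∧ phi vb vc N t z = z ∧ z ≠ va t ∧ z ≠ vb t ∧ z ≠ vc t := by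
      intro t ht z hzN hzv hzf
      have S := hPS t ht
      have hz1 : z ≠ vb t := by
        rintro rfl
        rw [show phi vb vc N (t+1) (vb t) = N + 2*t by simp [phi]] at hzf
        omega
      have hz2 : z ≠ vc t := by
        rintro rfl
        rw [show phi vb vc N (t+1) (vc t) = N + 2*t + 1 by
          simp [phi, Ne.symm S.h12, S.h12]] at hzf
        omega
      have hzf' : phi vb vc N (t+1) z = phi vb vc N t z := by simp [phi, hz1, hz2]
      rw [S.hverts] at hzv
      rcases Finset.mem_insert.mp hzv with rfl | hzv'
      · exact absurd rfl hz1
      rcases Finset.mem_insert.mp hzv' with rfl | hzv''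
      · exact absurd rfl hz2
      obtain ⟨hzne, hzmem⟩ := Finset.mem_erase.mp hzv''
      exact ⟨hzmem, by rw [← hzf', hzf], hzne, hz1, hz2⟩
    have descend : ∀ z, z < N → z ∈ (pf n).verts → phi vb vc N n z = z →
        ∀ t, t ≤ n → z ∈ (pf t).verts ∧ phi vb vc N t z = z := by
      intro z hzN hzn hzf
      have key : ∀ j t, t + j = n → z ∈ (pf t).verts ∧ phi vb vc N t z = z := by
        intro j
        induction j with
        | zero =>
            intro t ht
            have : t = n := by omega
            subst this
            exact ⟨hzn, hzf⟩
        | succ j IH =>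
            intro t ht
            have h1 := IH (t+1) (by omega)
            have h2 := down t (by omega) z hzN h1.1 h1.2
            exact ⟨h2.1, h2.2.1⟩
      intro t ht
      exact key (n - t) t (by omega)
    have hxe : x ∈ (pf n).verts ∧ phi vb vc N n x = x := surv x hx hxN
    have hye : y ∈ (pf n).verts ∧ phi vb vc N n y = y := surv y hy hyN
    have redkeep : ∀ t, t ≤ n → s(x,y) ∈ (pf t).red := by
      intro t
      induction t with
      | zero =>
          intro _
          rw [hp0]
          exact hexy ▸ hered
      | succ t IH =>
          intro ht
          have ht' : t < n := ht
          have S := hPS t ht'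
          have hx1 := descend x hxN hxe.1 hxe.2 (t+1) ht
          have hy1 := descend y hyN hye.1 hye.2 (t+1) ht
          have dx := down t ht' x hxN hx1.1 hx1.2
          have dy := down t ht' y hyN hy1.1 hy1.2
          exact ((S.hkeep x y dx.2.2.1 dy.2.2.1 dx.2.2.2.1 dx.2.2.2.2
            dy.2.2.2.1 dy.2.2.2.2).2).mp (IH (Nat.le_of_lt ht'))
    have lift : ∀ c d, Relation.ReflTransGen
        (fun a b => s(a,b) ∈ EE pf va vb vc N H.edges n) c d →
        ∀ z, z ∈ (pf n).verts → phi vb vc N n z = c →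
        ∃ w, w ∈ (pf n).verts ∧ phi vb vc N n w = d ∧
          Relation.ReflTransGen (fun a b => s(a,b) ∈ (pf n).blue) z w := by
      intro c d hcd
      induction hcd with
      | refl => intro z hz hzc; exact ⟨z, hz, hzc, Relation.ReflTransGen.refl⟩
      | @tail m d' hcm hmd IH =>
          intro z hz hzc
          obtain ⟨w, hw, hwm, hrtg⟩ := IH z hz hzc
          obtain ⟨hEV, hinj, hpre, hlt, hfix⟩ := inv n le_rfl
          obtain ⟨a, ha, b, hb, heq2, hblue⟩ := hpre _ hmd
          rcases Sym2.eq_iff.mp heq2.symm with ⟨h1, h2⟩ | ⟨h1, h2⟩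
          · have haw : a = w := hinj a ha w hw (by rw [h1, hwm])
            exact ⟨b, hb, h2, hrtg.tail (by rw [← haw]; exact hblue)⟩
          · have hbw : b = w := hinj b hb w hw (by rw [h2, hwm])
            exact ⟨a, ha, h1, hrtg.tail (by rw [Sym2.eq_swap, ← hbw]; exact hblue)⟩
    have hreach' : Relation.ReflTransGen
        (fun a b => s(a,b) ∈ EE pf va vb vc N H.edges n) x y := hreach
    obtain ⟨w, hw, hwy, hrtg⟩ := lift x y hreach' x hxe.1 hxe.2
    have hwyeq : w = y := (inv n le_rfl).2.1 w hw y hye.1 (by rw [hwy, hye.2])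
    rw [hwyeq] at hrtg
    obtain ⟨l, nd, ch, hh, hl⟩ := rtg_path hrtg
    exact herr ⟨l, x, y, nd, ch, hh, hl, redkeep n le_rfl⟩

open Finset

lemma flip_time {P : ℕ → Prop} : ∀ n, P 0 → ¬ P n → ∃ t < n, P t ∧ ¬ P (t+1)
  | 0, h0, hn => absurd h0 hn
  | n+1, h0, hn => by
      by_cases h : P n
      · exact ⟨n, Nat.lt_succ_self n, h, hn⟩
      · obtain ⟨t, ht, h1, h2⟩ := flip_time n h0 h
        exact ⟨t, by omega, h1, h2⟩

section Backward

variable (q : ℕ → SG × Finset ℕ) (v v1 v2 : ℕ → ℕ) (n : ℕ)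

def gg : ℕ → ℕ → ℕ
  | 0 => fun x => x
  | t+1 => fun x => gg t (if x = v1 t ∨ x = v2 t then v t else x)

def rp : ℕ → ℕ → ℕ
  | 0 => fun w => w
  | t+1 => fun w => if rp t w = v t then v1 t else rp t w

def tk : ℕ → ℕ → ℕ
  | 0 => fun w => w
  | t+1 => fun w => if tk t w = v t then v2 t else tk t w

def backAux : ℕ → ℕ → ℕ → ℕ
  | 0, _, a => a
  | m+1, t, a =>
      if backAux m (t+1) a = v1 t ∨ backAux m (t+1) a = v2 t then v t
      else backAux m (t+1) a

def back (t a : ℕ) : ℕ := backAux v v1 v2 (n - t) t a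

variable {q v v1 v2 n}

lemma gg_stable {t x : ℕ} (h1 : x ≠ v1 t) (h2 : x ≠ v2 t) :
    gg v v1 v2 (t+1) x = gg v v1 v2 t x := by simp [gg, h1, h2]

lemma gg_new1 {t : ℕ} : gg v v1 v2 (t+1) (v1 t) = gg v v1 v2 t (v t) := by simp [gg]

lemma gg_new2 {t : ℕ} : gg v v1 v2 (t+1) (v2 t) = gg v v1 v2 t (v t) := by simp [gg]

section ESfacts

variable {t : ℕ} (S : ES (q t) (q (t+1)) (v t) (v1 t) (v2 t))

include S

lemma es_vmem : ∀ x, x ∈ (q (t+1)).1.verts ↔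
    (x = v1 t ∨ x = v2 t ∨ (x ∈ (q t).1.verts ∧ x ≠ v t)) := by
  intro x
  rw [S.hverts]
  simp [Finset.mem_insert, Finset.mem_erase, and_comm]

lemma es_vt_not : v t ∉ (q (t+1)).1.verts := by
  intro h
  rcases (es_vmem S _).mp h with h1 | h1 | ⟨_, h1⟩
  · exact S.hw1 (h1 ▸ S.hv)
  · exact S.hw2 (h1 ▸ S.hv)
  · exact h1 rfl

lemma es_new_not : v1 t ∉ (q t).1.verts ∧ v2 t ∉ (q t).1.verts := ⟨S.hw1, S.hw2⟩

lemma es_E0 : s(v1 t, v2 t) ∉ (q (t+1)).1.edges := by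
  intro h
  have h2 : s(v1 t, v t) ∈ (q t).1.edges := (S.hsplit (v1 t)).mpr (by
    right
    exact h)
  exact S.hw1 ((q t).1.edges_mem _ h2 (v1 t) (by simp))

lemma es_E0' : s(v1 t, v1 t) ∉ (q (t+1)).1.edges ∧ s(v2 t, v2 t) ∉ (q (t+1)).1.edges :=
  ⟨fun h => (q (t+1)).1.edges_nd _ h (by simp), fun h => (q (t+1)).1.edges_nd _ h (by simp)⟩

lemma es_edge_new {x y : ℕ} (hxy : s(x,y) ∈ (q (t+1)).1.edges)
    (hx : x = v1 t ∨ x = v2 t) : y ≠ v1 t ∧ y ≠ v2 t ∧ s(y, v t) ∈ (q t).1.edges := by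
  have hy1 : y ≠ v1 t := by
    rintro rfl
    rcases hx with rfl | rfl
    · exact (q (t+1)).1.edges_nd _ hxy (by simp)
    · exact es_E0 S (by rwa [Sym2.eq_swap] at hxy)
  have hy2 : y ≠ v2 t := by
    rintro rfl
    rcases hx with rfl | rfl
    · exact es_E0 S hxy
    · exact (q (t+1)).1.edges_nd _ hxy (by simp)
  refine ⟨hy1, hy2, ?_⟩
  apply (S.hsplit y).mpr
  rcases hx with rfl | rfl
  · left; rwa [Sym2.eq_swap] at hxy
  · right; rwa [Sym2.eq_swap] at hxy

lemma es_edge_old {x y : ℕ} (hxy : s(x,y) ∈ (q (t+1)).1.edges)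
    (hx1 : x ≠ v1 t) (hx2 : x ≠ v2 t) (hy1 : y ≠ v1 t) (hy2 : y ≠ v2 t) :
    s(x,y) ∈ (q t).1.edges := by
  have hxv : x ≠ v t := by
    rintro rfl
    exact es_vt_not S ((q (t+1)).1.edges_mem _ hxy _ (by simp))
  have hyv : y ≠ v t := by
    rintro rfl
    exact es_vt_not S ((q (t+1)).1.edges_mem _ hxy _ (by simp))
  exact (S.hkeep x y hxv hyv hx1 hx2 hy1 hy2).mpr hxy

lemma es_edge_split {x : ℕ} (h : s(x, v t) ∈ (q t).1.edges) :
    s(x, v1 t) ∈ (q (t+1)).1.edges ∨ s(x, v2 t) ∈ (q (t+1)).1.edges :=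
  (S.hsplit x).mp h

end ESfacts

section WithES

variable (hES : ∀ i < n, ES (q i) (q (i+1)) (v i) (v1 i) (v2 i))
  (hVU : (q 0).1.verts ⊆ (q 0).2)

include hES

lemma used_mono : ∀ s t, s ≤ t → t ≤ n → (q s).2 ⊆ (q t).2 := by
  intro s t hst htn
  induction t with
  | zero => have : s = 0 := by omega
            subst this; exact subset_rfl
  | succ t IH =>
      rcases Nat.lt_or_ge s (t+1) with h | h
      · have hsub := IH (by omega) (by omega)
        rw [(hES t (by omega)).hused]
        exact hsub.trans ((Finset.subset_insert _ _).trans (Finset.subset_insert _ _))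
      · have : s = t+1 := by omega
        subst this; exact subset_rfl

include hVU

lemma verts_sub_used : ∀ t ≤ n, (q t).1.verts ⊆ (q t).2 := by
  intro t
  induction t with
  | zero => intro _; exact hVU
  | succ t IH =>
      intro ht
      have S := hES t (by omega)
      intro z hz
      rw [S.hused]
      rcases (es_vmem S z).mp hz with rfl | rfl | ⟨hz', _⟩
      · exact Finset.mem_insert_self _ _
      · exact Finset.mem_insert_of_mem (Finset.mem_insert_self _ _)
      · exact Finset.mem_insert_of_mem (Finset.mem_insert_of_mem
          (IH (by omega) hz'))

lemma noreturn : ∀ t, t < n → ∀ z ∈ (q t).1.verts, z ∉ (q (t+1)).1.verts →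
    ∀ s, t < s → s ≤ n → z ∉ (q s).1.verts := by
  intro t ht z hz hz1 s hs hsn
  have key : ∀ m, t+1+m ≤ n → z ∉ (q (t+1+m)).1.verts ∧ z ∈ (q (t+1+m)).2 := by
    intro m
    induction m with
    | zero =>
        intro h
        refine ⟨hz1, ?_⟩
        have h1 : z ∈ (q t).2 := verts_sub_used hES hVU t (by omega) hz
        exact used_mono hES t (t+1) (by omega) (by omega) h1
    | succ m IH =>
        intro h
        obtain ⟨h1, h2⟩ := IH (by omega)
        have S := hES (t+1+m) (by omega)
        rw [show t+1+(m+1) = (t+1+m)+1 from by omega]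
        constructor
        · intro hmem
          rcases (es_vmem S z).mp hmem with rfl | rfl | ⟨h3, _⟩
          · exact S.hu1 h2
          · exact S.hu2 h2
          · exact h1 h3
        · rw [S.hused]
          exact Finset.mem_insert_of_mem (Finset.mem_insert_of_mem h2)
  have := key (s - (t+1)) (by omega)
  have heq : t+1+(s-(t+1)) = s := by omega
  rw [heq] at this
  exact this.1

lemma new_not_before {t : ℕ} (ht : t < n) :
    ∀ s ≤ t, v1 t ∉ (q s).1.verts ∧ v2 t ∉ (q s).1.verts := by
  intro s hs
  have S := hES t ht
  constructor
  · intro h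
    exact S.hu1 (used_mono hES s t hs (by omega)
      (verts_sub_used hES hVU s (by omega) h))
  · intro h
    exact S.hu2 (used_mono hES s t hs (by omega)
      (verts_sub_used hES hVU s (by omega) h))

omit hVU

lemma trace : ∀ t ≤ n, ∀ x y, s(x,y) ∈ (q t).1.edges →
    s(gg v v1 v2 t x, gg v v1 v2 t y) ∈ (q 0).1.edges := by
  intro t
  induction t with
  | zero => intro _ x y h; exact h
  | succ t IH =>
      intro ht x y h
      have S := hES t (by omega)
      by_cases hx : x = v1 t ∨ x = v2 t
      · obtain ⟨hy1, hy2, hedge⟩ := es_edge_new S h hx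
        have hgx : gg v v1 v2 (t+1) x = gg v v1 v2 t (v t) := by
          rcases hx with rfl | rfl
          · exact gg_new1
          · exact gg_new2
        rw [hgx, gg_stable hy1 hy2]
        have := IH (by omega) y (v t) hedge
        rwa [Sym2.eq_swap] at this
      · push_neg at hx
        by_cases hy : y = v1 t ∨ y = v2 t
        · obtain ⟨hx1, hx2, hedge⟩ := es_edge_new S (by rwa [Sym2.eq_swap] at h) hy
          have hgy : gg v v1 v2 (t+1) y = gg v v1 v2 t (v t) := by
            rcases hy with rfl | rfl
            · exact gg_new1
            · exact gg_new2
          rw [hgy, gg_stable hx.1 hx.2]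
          exact IH (by omega) x (v t) hedge
        · push_neg at hy
          rw [gg_stable hx.1 hx.2, gg_stable hy.1 hy.2]
          exact IH (by omega) x y (es_edge_old S h hx.1 hx.2 hy.1 hy.2)

lemma gg_mem : ∀ t ≤ n, ∀ x ∈ (q t).1.verts, gg v v1 v2 t x ∈ (q 0).1.verts := by
  intro t
  induction t with
  | zero => intro _ x hx; exact hx
  | succ t IH =>
      intro ht x hx
      have S := hES t (by omega)
      rcases (es_vmem S x).mp hx with rfl | rfl | ⟨hx', hxv⟩
      · rw [gg_new1]; exact IH (by omega) _ S.hv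
      · rw [gg_new2]; exact IH (by omega) _ S.hv
      · rw [gg_stable (fun h => S.hw1 (by rw [← h]; exact hx'))
          (fun h => S.hw2 (by rw [← h]; exact hx'))]
        exact IH (by omega) x hx'

include hVU

lemma orig_fix : ∀ t ≤ n, ∀ x, x ∈ (q 0).1.verts → x ∈ (q t).1.verts →
    gg v v1 v2 t x = x := by
  intro t
  induction t with
  | zero => intro _ x _ _; rfl
  | succ t IH =>
      intro ht x hx0 hxt
      have S := hES t (by omega)
      have hnb := new_not_before hES hVU (show t < n by omega) 0 (by omega)
      have hx1 : x ≠ v1 t := fun h => hnb.1 (by rw [← h]; exact hx0)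
      have hx2 : x ≠ v2 t := fun h => hnb.2 (by rw [← h]; exact hx0)
      rcases (es_vmem S x).mp hxt with rfl | rfl | ⟨hx', _⟩
      · exact absurd rfl hx1
      · exact absurd rfl hx2
      · rw [gg_stable hx1 hx2]
        exact IH (by omega) x hx0 hx'

omit hVU

lemma desc_ne : ∀ t ≤ n, ∀ u ∈ (q 0).1.verts, ∃ x, x ∈ (q t).1.verts ∧
    gg v v1 v2 t x = u := by
  intro t
  induction t with
  | zero => intro _ u hu; exact ⟨u, hu, rfl⟩
  | succ t IH =>
      intro ht u hu
      obtain ⟨x, hx, hgx⟩ := IH (by omega) u hu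
      have S := hES t (by omega)
      by_cases hxv : x = v t
      · subst hxv
        exact ⟨v1 t, (es_vmem S _).mpr (Or.inl rfl), by rw [gg_new1]; exact hgx⟩
      · have hx1 : x ≠ v1 t := fun h => S.hw1 (h ▸ hx)
        have hx2 : x ≠ v2 t := fun h => S.hw2 (h ▸ hx)
        exact ⟨x, (es_vmem S _).mpr (Or.inr (Or.inr ⟨hx, hxv⟩)),
          by rw [gg_stable hx1 hx2]; exact hgx⟩

lemma rp_mem : ∀ t ≤ n, ∀ w ∈ (q 0).1.verts,
    rp v v1 t w ∈ (q t).1.verts ∧ gg v v1 v2 t (rp v v1 t w) = w := by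
  intro t
  induction t with
  | zero => intro _ w hw; exact ⟨hw, rfl⟩
  | succ t IH =>
      intro ht w hw
      obtain ⟨h1, h2⟩ := IH (by omega) w hw
      have S := hES t (by omega)
      by_cases hrv : rp v v1 t w = v t
      · rw [show rp v v1 (t+1) w = v1 t by simp [rp, hrv]]
        refine ⟨(es_vmem S _).mpr (Or.inl rfl), ?_⟩
        rw [gg_new1, ← hrv]
        exact h2
      · rw [show rp v v1 (t+1) w = rp v v1 t w by simp [rp, hrv]]
        have hx1 : rp v v1 t w ≠ v1 t := fun h => S.hw1 (h ▸ h1)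
        have hx2 : rp v v1 t w ≠ v2 t := fun h => S.hw2 (h ▸ h1)
        exact ⟨(es_vmem S _).mpr (Or.inr (Or.inr ⟨h1, hrv⟩)), by rw [gg_stable hx1 hx2]; exact h2⟩

lemma tk_mem : ∀ t ≤ n, ∀ w ∈ (q 0).1.verts,
    tk v v2 t w ∈ (q t).1.verts ∧ gg v v1 v2 t (tk v v2 t w) = w := by
  intro t
  induction t with
  | zero => intro _ w hw; exact ⟨hw, rfl⟩
  | succ t IH =>
      intro ht w hw
      obtain ⟨h1, h2⟩ := IH (by omega) w hw
      have S := hES t (by omega)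
      by_cases hrv : tk v v2 t w = v t
      · rw [show tk v v2 (t+1) w = v2 t by simp [tk, hrv]]
        refine ⟨(es_vmem S _).mpr (Or.inr (Or.inl rfl)), ?_⟩
        rw [gg_new2, ← hrv]
        exact h2
      · rw [show tk v v2 (t+1) w = tk v v2 t w by simp [tk, hrv]]
        have hx1 : tk v v2 t w ≠ v1 t := fun h => S.hw1 (h ▸ h1)
        have hx2 : tk v v2 t w ≠ v2 t := fun h => S.hw2 (h ▸ h1)
        exact ⟨(es_vmem S _).mpr (Or.inr (Or.inr ⟨h1, hrv⟩)), by rw [gg_stable hx1 hx2]; exact h2⟩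

lemma back_mem : ∀ m t a, t + m = n → a ∈ (q n).1.verts →
    backAux v v1 v2 m t a ∈ (q t).1.verts ∧
    gg v v1 v2 t (backAux v v1 v2 m t a) = gg v v1 v2 n a := by
  intro m
  induction m with
  | zero =>
      intro t a ht ha
      have : t = n := by omega
      subst this
      exact ⟨ha, rfl⟩
  | succ m IH =>
      intro t a ht ha
      obtain ⟨h1, h2⟩ := IH (t+1) a (by omega) ha
      have S := hES t (by omega)
      by_cases hx : backAux v v1 v2 m (t+1) a = v1 t ∨ backAux v v1 v2 m (t+1) a = v2 t
      · rw [show backAux v v1 v2 (m+1) t a = v t by simp [backAux, hx]]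
        refine ⟨S.hv, ?_⟩
        rcases hx with hx | hx
        · rw [hx, gg_new1] at h2; exact h2
        · rw [hx, gg_new2] at h2; exact h2
      · push_neg at hx
        rw [show backAux v v1 v2 (m+1) t a = backAux v v1 v2 m (t+1) a by
          simp [backAux]; intro h; rcases h with h | h; exact absurd h hx.1; exact absurd h hx.2]
        rcases (es_vmem S _).mp h1 with h | h | ⟨h3, _⟩
        · exact absurd h hx.1
        · exact absurd h hx.2
        · exact ⟨h3, by rw [← gg_stable hx.1 hx.2]; exact h2⟩

end WithES

end Backward



section Backward2

variable (q : ℕ → SG × Finset ℕ) (v v1 v2 : ℕ → ℕ) (n : ℕ) (W : Finset ℕ)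
  (sep : Sym2 ℕ → Prop) (ta tb pu pv : Sym2 ℕ → ℕ)

open Classical in
noncomputable def rho (t x : ℕ) : ℕ :=
  if gg v v1 v2 t x ∈ W then rp v v1 t (gg v v1 v2 t x) else x

open Classical in
noncomputable def hUU (t : ℕ) (e : Sym2 ℕ) : ℕ :=
  if sep e then back v v1 v2 n t (ta e) else rp v v1 t (pu e)

open Classical in
noncomputable def hVV (t : ℕ) (e : Sym2 ℕ) : ℕ :=
  if sep e then back v v1 v2 n t (tb e) else tk v v2 t (pv e)

noncomputable def hold (t : ℕ) (e : Sym2 ℕ) : Sym2 ℕ :=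
  s(hUU v v1 v2 n sep ta pu t e, hVV v v1 v2 n sep tb pv t e)

noncomputable def Qblue (t : ℕ) : Finset (Sym2 ℕ) :=
  ((q t).1.edges).image (Sym2.map (rho v v1 v2 W t))

noncomputable def Qred (R0 : Finset (Sym2 ℕ)) (t : ℕ) : Finset (Sym2 ℕ) :=
  R0.image (hold v v1 v2 n sep ta tb pu pv t)

section Lemmas

variable {q : ℕ → SG × Finset ℕ} {v v1 v2 : ℕ → ℕ} {n : ℕ} {W : Finset ℕ}
  {sep : Sym2 ℕ → Prop} {ta tb pu pv : Sym2 ℕ → ℕ} {R0 : Finset (Sym2 ℕ)}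

variable (hES : ∀ i < n, ES (q i) (q (i+1)) (v i) (v1 i) (v2 i))
  (hVU : (q 0).1.verts ⊆ (q 0).2)
  (hR0mem : ∀ e ∈ R0, ∀ x ∈ e, x ∈ (q 0).1.verts)
  (hR0nd : ∀ e ∈ R0, ¬ e.IsDiag)
  (hR0disj : ∀ e ∈ R0, e ∉ (q 0).1.edges)
  (hor : ∀ e ∈ R0, s(pu e, pv e) = e)
  (hta : ∀ e ∈ R0, sep e → ta e ∈ (q n).1.verts ∧ tb e ∈ (q n).1.verts ∧
    s(gg v v1 v2 n (ta e), gg v v1 v2 n (tb e)) = e ∧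
    ¬ Relation.ReflTransGen (fun a b => s(a,b) ∈ (q n).1.edges) (ta e) (tb e))
  (hshed : ∀ e ∈ R0, ¬ sep e → pv e ∈ W ∧ pv e ∉ (q n).1.verts)
  (hW0 : ∀ w ∈ W, w ∈ (q 0).1.verts)
  (hWcoh : ∀ w ∈ W, ∀ x y, x ∈ (q n).1.verts → y ∈ (q n).1.verts →
    gg v v1 v2 n x = w → gg v v1 v2 n y = w →
    Relation.ReflTransGen (fun a b => s(a,b) ∈ (q n).1.edges) x y)

include hES

lemma back_mem' {t a : ℕ} (ht : t ≤ n) (ha : a ∈ (q n).1.verts) :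
    back v v1 v2 n t a ∈ (q t).1.verts ∧
    gg v v1 v2 t (back v v1 v2 n t a) = gg v v1 v2 n a := by
  unfold back
  exact back_mem hES (n - t) t a (by omega) ha

omit hES

lemma back_nn (a : ℕ) : back v v1 v2 n n a = a := by
  unfold back
  rw [Nat.sub_self]
  rfl

lemma back_step {t : ℕ} (ht : t < n) (a : ℕ) :
    back v v1 v2 n t a = if back v v1 v2 n (t+1) a = v1 t ∨ back v v1 v2 n (t+1) a = v2 t
      then v t else back v v1 v2 n (t+1) a := by
  show backAux v v1 v2 (n - t) t a = _
  rw [show n - t = (n - (t+1)) + 1 from by omega]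
  rfl

include hES

lemma back_move {t a : ℕ} (ht : t < n) (ha : a ∈ (q n).1.verts) :
    (back v v1 v2 n t a = v t → back v v1 v2 n (t+1) a = v1 t ∨ back v v1 v2 n (t+1) a = v2 t) ∧
    (back v v1 v2 n t a ≠ v t → back v v1 v2 n (t+1) a = back v v1 v2 n t a) := by
  have hb := back_mem' hES (show t+1 ≤ n by omega) ha
  rw [back_step ht a]
  by_cases h : back v v1 v2 n (t+1) a = v1 t ∨ back v v1 v2 n (t+1) a = v2 t
  · rw [if_pos h]
    exact ⟨fun _ => h, fun hne => absurd rfl hne⟩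
  · rw [if_neg h]
    refine ⟨fun heq => ?_, fun _ => rfl⟩
    rw [heq] at hb
    exact absurd hb.1 (es_vt_not (hES t ht))

include hR0mem hor

omit hES in
lemma pu_mem0 {e : Sym2 ℕ} (he : e ∈ R0) :
    pu e ∈ (q 0).1.verts ∧ pv e ∈ (q 0).1.verts := by
  constructor
  · exact hR0mem e he (pu e) (by
      have h := Sym2.mem_mk_left (pu e) (pv e)
      rwa [hor e he] at h)
  · exact hR0mem e he (pv e) (by
      have h := Sym2.mem_mk_right (pu e) (pv e)
      rwa [hor e he] at h)

include hta

lemma hold_orig {t : ℕ} (ht : t ≤ n) {e : Sym2 ℕ} (he : e ∈ R0) :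
    s(gg v v1 v2 t (hUU v v1 v2 n sep ta pu t e),
      gg v v1 v2 t (hVV v v1 v2 n sep tb pv t e)) = e := by
  by_cases hs : sep e
  · simp only [hUU, hVV, if_pos hs]
    obtain ⟨h1, h2, h3, _⟩ := hta e he hs
    rw [(back_mem' hES ht h1).2, (back_mem' hES ht h2).2]
    exact h3
  · simp only [hUU, hVV, if_neg hs]
    rw [(rp_mem hES t ht (pu e) (pu_mem0 hR0mem hor he).1).2,
        (tk_mem hES t ht (pv e) (pu_mem0 hR0mem hor he).2).2]
    exact hor e he

lemma hUU_mem {t : ℕ} (ht : t ≤ n) {e : Sym2 ℕ} (he : e ∈ R0) :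
    hUU v v1 v2 n sep ta pu t e ∈ (q t).1.verts := by
  by_cases hs : sep e
  · simp only [hUU, if_pos hs]
    exact (back_mem' hES ht (hta e he hs).1).1
  · simp only [hUU, if_neg hs]
    exact (rp_mem hES t ht (pu e) (pu_mem0 hR0mem hor he).1).1

lemma hVV_mem {t : ℕ} (ht : t ≤ n) {e : Sym2 ℕ} (he : e ∈ R0) :
    hVV v v1 v2 n sep tb pv t e ∈ (q t).1.verts := by
  by_cases hs : sep e
  · simp only [hVV, if_pos hs]
    exact (back_mem' hES ht (hta e he hs).2.1).1
  · simp only [hVV, if_neg hs]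
    exact (tk_mem hES t ht (pv e) (pu_mem0 hR0mem hor he).2).1

include hR0nd

lemma hUU_ne_hVV {t : ℕ} (ht : t ≤ n) {e : Sym2 ℕ} (he : e ∈ R0) :
    hUU v v1 v2 n sep ta pu t e ≠ hVV v v1 v2 n sep tb pv t e := by
  intro h
  apply hR0nd e he
  rw [← hold_orig hES hR0mem hor hta ht he, h, Sym2.mk_isDiag_iff]

omit hR0nd

lemma hUU_step {t : ℕ} (ht : t < n) {e : Sym2 ℕ} (he : e ∈ R0) :
    (hUU v v1 v2 n sep ta pu t e = v t →
      hUU v v1 v2 n sep ta pu (t+1) e = v1 t ∨ hUU v v1 v2 n sep ta pu (t+1) e = v2 t) ∧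
    (hUU v v1 v2 n sep ta pu t e ≠ v t →
      hUU v v1 v2 n sep ta pu (t+1) e = hUU v v1 v2 n sep ta pu t e) := by
  by_cases hs : sep e
  · simp only [hUU, if_pos hs]
    exact back_move hES ht (hta e he hs).1
  · simp only [hUU, if_neg hs]
    constructor
    · intro h; left; simp [rp, h]
    · intro h; simp [rp, h]

lemma hVV_step {t : ℕ} (ht : t < n) {e : Sym2 ℕ} (he : e ∈ R0) :
    (hVV v v1 v2 n sep tb pv t e = v t →
      hVV v v1 v2 n sep tb pv (t+1) e = v1 t ∨ hVV v v1 v2 n sep tb pv (t+1) e = v2 t) ∧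
    (hVV v v1 v2 n sep tb pv t e ≠ v t →
      hVV v v1 v2 n sep tb pv (t+1) e = hVV v v1 v2 n sep tb pv t e) := by
  by_cases hs : sep e
  · simp only [hVV, if_pos hs]
    exact back_move hES ht (hta e he hs).2.1
  · simp only [hVV, if_neg hs]
    constructor
    · intro h; right; simp [tk, h]
    · intro h; simp [tk, h]

lemma hUU_rev {t : ℕ} (ht : t < n) {e : Sym2 ℕ} (he : e ∈ R0)
    (h1 : hUU v v1 v2 n sep ta pu (t+1) e ≠ v1 t)
    (h2 : hUU v v1 v2 n sep ta pu (t+1) e ≠ v2 t) :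
    hUU v v1 v2 n sep ta pu (t+1) e = hUU v v1 v2 n sep ta pu t e := by
  by_cases h : hUU v v1 v2 n sep ta pu t e = v t
  · rcases (hUU_step hES hR0mem hor hta ht he).1 h with h' | h'
    · exact absurd h' h1
    · exact absurd h' h2
  · exact (hUU_step hES hR0mem hor hta ht he).2 h

lemma hVV_rev {t : ℕ} (ht : t < n) {e : Sym2 ℕ} (he : e ∈ R0)
    (h1 : hVV v v1 v2 n sep tb pv (t+1) e ≠ v1 t)
    (h2 : hVV v v1 v2 n sep tb pv (t+1) e ≠ v2 t) :
    hVV v v1 v2 n sep tb pv (t+1) e = hVV v v1 v2 n sep tb pv t e := by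
  by_cases h : hVV v v1 v2 n sep tb pv t e = v t
  · rcases (hVV_step hES hR0mem hor hta ht he).1 h with h' | h'
    · exact absurd h' h1
    · exact absurd h' h2
  · exact (hVV_step hES hR0mem hor hta ht he).2 h

omit hR0mem hor hta

include hW0

lemma rho_gg {t : ℕ} (ht : t ≤ n) (x : ℕ) :
    gg v v1 v2 t (rho v v1 v2 W t x) = gg v v1 v2 t x := by
  unfold rho
  split_ifs with h
  · exact (rp_mem hES t ht _ (hW0 _ h)).2
  · rfl

lemma rho_mem {t : ℕ} (ht : t ≤ n) {x : ℕ} (hx : x ∈ (q t).1.verts) :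
    rho v v1 v2 W t x ∈ (q t).1.verts := by
  unfold rho
  split_ifs with h
  · exact (rp_mem hES t ht _ (hW0 _ h)).1
  · exact hx

lemma rho_succ {t : ℕ} (ht : t < n) {x : ℕ} (hx : x ∈ (q t).1.verts) (hxv : x ≠ v t) :
    rho v v1 v2 W (t+1) x =
      if rho v v1 v2 W t x = v t then v1 t else rho v v1 v2 W t x := by
  have hx1 : x ≠ v1 t := fun h => (hES t ht).hw1 (by rw [← h]; exact hx)
  have hx2 : x ≠ v2 t := fun h => (hES t ht).hw2 (by rw [← h]; exact hx)
  unfold rho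
  rw [gg_stable hx1 hx2]
  by_cases h : gg v v1 v2 t x ∈ W
  · rw [if_pos h, if_pos h]
    simp [rp]
  · rw [if_neg h, if_neg h, if_neg hxv]

lemma rho_new {t : ℕ} (ht : t < n) :
    (rho v v1 v2 W t (v t) = v t ∧
      ((rho v v1 v2 W (t+1) (v1 t) = v1 t ∧ rho v v1 v2 W (t+1) (v2 t) = v1 t) ∨
       (rho v v1 v2 W (t+1) (v1 t) = v1 t ∧ rho v v1 v2 W (t+1) (v2 t) = v2 t))) ∨
    (rho v v1 v2 W t (v t) ≠ v t ∧
      rho v v1 v2 W (t+1) (v1 t) = rho v v1 v2 W t (v t) ∧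
      rho v v1 v2 W (t+1) (v2 t) = rho v v1 v2 W t (v t)) := by
  have hg1 : gg v v1 v2 (t+1) (v1 t) = gg v v1 v2 t (v t) := gg_new1
  have hg2 : gg v v1 v2 (t+1) (v2 t) = gg v v1 v2 t (v t) := gg_new2
  by_cases hc : gg v v1 v2 t (v t) ∈ W
  · by_cases hr : rp v v1 t (gg v v1 v2 t (v t)) = v t
    · left
      constructor
      · unfold rho; rw [if_pos hc]; exact hr
      · left
        constructor
        · unfold rho; rw [hg1, if_pos hc]; simp [rp, hr]
        · unfold rho; rw [hg2, if_pos hc]; simp [rp, hr]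
    · right
      refine ⟨?_, ?_, ?_⟩
      · unfold rho; rw [if_pos hc]; exact hr
      · unfold rho; rw [hg1, if_pos hc, if_pos hc]; simp [rp, hr]
      · unfold rho; rw [hg2, if_pos hc, if_pos hc]; simp [rp, hr]
  · left
    constructor
    · unfold rho; rw [if_neg hc]
    · right
      constructor
      · unfold rho; rw [hg1, if_neg hc]
      · unfold rho; rw [hg2, if_neg hc]

include hW0 in
lemma CLnew_bwd {t : ℕ} (ht : t < n) {x y u' w' : ℕ}
    (hxn : x = v1 t ∨ x = v2 t)
    (hu'1 : u' ≠ v1 t) (hu'2 : u' ≠ v2 t) (hw'1 : w' ≠ v1 t)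
    (hxy : s(x,y) ∈ (q (t+1)).1.edges)
    (hx : rho v v1 v2 W (t+1) x = u') (hy : rho v v1 v2 W (t+1) y = w') :
    s(u', w') ∈ Qblue q v v1 v2 W t := by
  have S := hES t ht
  obtain ⟨hy1, hy2, hedge⟩ := es_edge_new S hxy hxn
  rcases rho_new hES hW0 (W := W) ht with ⟨h0, hcase⟩ | ⟨h0, hn1, hn2⟩
  · have hval : rho v v1 v2 W (t+1) x = v1 t ∨ rho v v1 v2 W (t+1) x = v2 t := by
      rcases hxn with rfl | rfl <;> rcases hcase with ⟨a, b⟩ | ⟨a, b⟩ <;> simp [a, b]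
    rcases hval with hh | hh
    · rw [hx] at hh; exact absurd hh hu'1
    · rw [hx] at hh; exact absurd hh hu'2
  · have hxval : rho v v1 v2 W (t+1) x = rho v v1 v2 W t (v t) := by
      rcases hxn with rfl | rfl
      · exact hn1
      · exact hn2
    have hym' : y ∈ (q t).1.verts := (q t).1.edges_mem _ hedge y (by simp)
    have hyv : y ≠ v t := fun hh =>
      (q t).1.edges_nd _ hedge (by rw [Sym2.mk_isDiag_iff]; exact hh)
    have hry : rho v v1 v2 W t y = w' := by
      rw [rho_succ hES hW0 ht hym' hyv] at hy
      by_cases hcc : rho v v1 v2 W t y = v t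
      · rw [if_pos hcc] at hy; exact absurd hy.symm hw'1
      · rwa [if_neg hcc] at hy
    refine Finset.mem_image.mpr ⟨s(y, v t), hedge, ?_⟩
    rw [Sym2.map_pair_eq, hry, show rho v v1 v2 W t (v t) = u' from by rw [← hxval, hx]]
    exact Sym2.eq_swap

include hW0 in
lemma Lblue_bwd {t : ℕ} (ht : t < n) {u w : ℕ}
    (hu1 : u ≠ v1 t) (hu2 : u ≠ v2 t) (hw1 : w ≠ v1 t) (hw2 : w ≠ v2 t)
    (h : s(u,w) ∈ Qblue q v v1 v2 W (t+1)) : s(u,w) ∈ Qblue q v v1 v2 W t := by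
  classical
  have S := hES t ht
  obtain ⟨e, he, heq⟩ := Finset.mem_image.mp h
  have CL : ∀ x y u' w', u' ≠ v1 t → u' ≠ v2 t → w' ≠ v1 t → w' ≠ v2 t →
      s(x,y) ∈ (q (t+1)).1.edges →
      rho v v1 v2 W (t+1) x = u' → rho v v1 v2 W (t+1) y = w' →
      s(u', w') ∈ Qblue q v v1 v2 W t := by
    intro x y u' w' hu'1 hu'2 hw'1 hw'2 hxy hx hy
    by_cases hxn : x = v1 t ∨ x = v2 t
    · exact CLnew_bwd hES hW0 ht hxn hu'1 hu'2 hw'1 hxy hx hy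
    · by_cases hyn : y = v1 t ∨ y = v2 t
      · have := CLnew_bwd hES hW0 ht hyn hw'1 hw'2 hu'1
          (by rwa [Sym2.eq_swap] at hxy) hy hx
        rwa [Sym2.eq_swap] at this
      · push_neg at hxn hyn
        have hedge := es_edge_old S hxy hxn.1 hxn.2 hyn.1 hyn.2
        have hxm : x ∈ (q t).1.verts := (q t).1.edges_mem _ hedge x (by simp)
        have hym : y ∈ (q t).1.verts := (q t).1.edges_mem _ hedge y (by simp)
        have hxv : x ≠ v t := by
          rintro rfl
          exact es_vt_not S ((q (t+1)).1.edges_mem _ hxy _ (by simp))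
        have hyv : y ≠ v t := by
          rintro rfl
          exact es_vt_not S ((q (t+1)).1.edges_mem _ hxy _ (by simp))
        have hrx : rho v v1 v2 W t x = u' := by
          rw [rho_succ hES hW0 ht hxm hxv] at hx
          by_cases hcc : rho v v1 v2 W t x = v t
          · rw [if_pos hcc] at hx; exact absurd hx.symm hu'1
          · rwa [if_neg hcc] at hx
        have hry : rho v v1 v2 W t y = w' := by
          rw [rho_succ hES hW0 ht hym hyv] at hy
          by_cases hcc : rho v v1 v2 W t y = v t
          · rw [if_pos hcc] at hy; exact absurd hy.symm hw'1
          · rwa [if_neg hcc] at hy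
        exact Finset.mem_image.mpr ⟨s(x,y), hedge, by rw [Sym2.map_pair_eq, hrx, hry]⟩
  revert he heq
  induction e using Sym2.ind with
  | _ x y =>
    intro he heq
    rw [Sym2.map_pair_eq] at heq
    rcases Sym2.eq_iff.mp heq with ⟨h1, h2⟩ | ⟨h1, h2⟩
    · exact CL x y u w hu1 hu2 hw1 hw2 he h1 h2
    · have := CL x y w u hw1 hw2 hu1 hu2 he h1 h2
      rwa [Sym2.eq_swap] at this

include hW0 in
lemma Lblue_fwd {t : ℕ} (ht : t < n) {u w : ℕ}
    (hu : u ≠ v t) (hw : w ≠ v t)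
    (h : s(u,w) ∈ Qblue q v v1 v2 W t) : s(u,w) ∈ Qblue q v v1 v2 W (t+1) := by
  classical
  have S := hES t ht
  obtain ⟨e, he, heq⟩ := Finset.mem_image.mp h
  have CL : ∀ x y u' w', u' ≠ v t → w' ≠ v t →
      s(x,y) ∈ (q t).1.edges →
      rho v v1 v2 W t x = u' → rho v v1 v2 W t y = w' →
      s(u', w') ∈ Qblue q v v1 v2 W (t+1) := by
    intro x y u' w' hu' hw' hxy hx hy
    have hxm : x ∈ (q t).1.verts := (q t).1.edges_mem _ hxy x (by simp)
    have hym : y ∈ (q t).1.verts := (q t).1.edges_mem _ hxy y (by simp)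
    have hnd : x ≠ y := fun hh =>
      (q t).1.edges_nd _ hxy (by rw [Sym2.mk_isDiag_iff]; exact hh)
    by_cases hxv : x = v t
    · subst hxv
      have hyv : y ≠ v t := fun hh => hnd hh.symm
      rcases rho_new hES hW0 (W := W) ht with ⟨h0, _⟩ | ⟨h0, hn1, hn2⟩
      · rw [hx] at h0; exact absurd h0 hu'
      · have hry : rho v v1 v2 W (t+1) y = w' := by
          rw [rho_succ hES hW0 ht hym hyv, hy, if_neg hw']
        rcases es_edge_split S (x := y) (by rwa [Sym2.eq_swap] at hxy) with hs1 | hs1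
        · refine Finset.mem_image.mpr ⟨s(y, v1 t), hs1, ?_⟩
          rw [Sym2.map_pair_eq, hry, hn1, hx]
          exact Sym2.eq_swap
        · refine Finset.mem_image.mpr ⟨s(y, v2 t), hs1, ?_⟩
          rw [Sym2.map_pair_eq, hry, hn2, hx]
          exact Sym2.eq_swap
    · by_cases hyv : y = v t
      · subst hyv
        rcases rho_new hES hW0 (W := W) ht with ⟨h0, _⟩ | ⟨h0, hn1, hn2⟩
        · rw [hy] at h0; exact absurd h0 hw'
        · have hrx : rho v v1 v2 W (t+1) x = u' := by
            rw [rho_succ hES hW0 ht hxm hxv, hx, if_neg hu']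
          rcases es_edge_split S hxy with hs1 | hs1
          · exact Finset.mem_image.mpr ⟨s(x, v1 t), hs1,
              by rw [Sym2.map_pair_eq, hrx, hn1, hy]⟩
          · exact Finset.mem_image.mpr ⟨s(x, v2 t), hs1,
              by rw [Sym2.map_pair_eq, hrx, hn2, hy]⟩
      · have hx1 : x ≠ v1 t := fun hh => S.hw1 (by rw [← hh]; exact hxm)
        have hx2 : x ≠ v2 t := fun hh => S.hw2 (by rw [← hh]; exact hxm)
        have hy1 : y ≠ v1 t := fun hh => S.hw1 (by rw [← hh]; exact hym)
        have hy2 : y ≠ v2 t := fun hh => S.hw2 (by rw [← hh]; exact hym)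
        have hedge : s(x,y) ∈ (q (t+1)).1.edges :=
          (S.hkeep x y hxv hyv hx1 hx2 hy1 hy2).mp hxy
        refine Finset.mem_image.mpr ⟨s(x,y), hedge, ?_⟩
        rw [Sym2.map_pair_eq, rho_succ hES hW0 ht hxm hxv, hx, if_neg hu',
          rho_succ hES hW0 ht hym hyv, hy, if_neg hw']
  revert he heq
  induction e using Sym2.ind with
  | _ x y =>
    intro he heq
    rw [Sym2.map_pair_eq] at heq
    rcases Sym2.eq_iff.mp heq with ⟨h1, h2⟩ | ⟨h1, h2⟩
    · exact CL x y u w hu hw he h1 h2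
    · have := CL x y w u hw hu he h1 h2
      rwa [Sym2.eq_swap] at this

include hW0 in
lemma Lblue_split {t : ℕ} (ht : t < n) {u : ℕ} (hu : u ≠ v t)
    (h : s(u, v t) ∈ Qblue q v v1 v2 W t) :
    s(u, v1 t) ∈ Qblue q v v1 v2 W (t+1) ∨ s(u, v2 t) ∈ Qblue q v v1 v2 W (t+1) := by
  classical
  have S := hES t ht
  obtain ⟨e, he, heq⟩ := Finset.mem_image.mp h
  have CL : ∀ x y, s(x,y) ∈ (q t).1.edges →
      rho v v1 v2 W t x = u → rho v v1 v2 W t y = v t →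
      s(u, v1 t) ∈ Qblue q v v1 v2 W (t+1) ∨ s(u, v2 t) ∈ Qblue q v v1 v2 W (t+1) := by
    intro x y hxy hx hy
    have hxm : x ∈ (q t).1.verts := (q t).1.edges_mem _ hxy x (by simp)
    have hym : y ∈ (q t).1.verts := (q t).1.edges_mem _ hxy y (by simp)
    have hnd : x ≠ y := fun hh =>
      (q t).1.edges_nd _ hxy (by rw [Sym2.mk_isDiag_iff]; exact hh)
    by_cases hyv : y = v t
    · subst hyv
      have hxv : x ≠ v t := hnd
      have hrx : rho v v1 v2 W (t+1) x = u := by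
        rw [rho_succ hES hW0 ht hxm hxv, hx, if_neg hu]
      rcases rho_new hES hW0 (W := W) ht with ⟨h0, hcase⟩ | ⟨h0, _, _⟩
      · rcases es_edge_split S hxy with hs1 | hs1
        · left
          refine Finset.mem_image.mpr ⟨s(x, v1 t), hs1, ?_⟩
          rcases hcase with ⟨a, _⟩ | ⟨a, _⟩ <;> rw [Sym2.map_pair_eq, hrx, a]
        · rcases hcase with ⟨_, b⟩ | ⟨_, b⟩
          · left
            exact Finset.mem_image.mpr ⟨s(x, v2 t), hs1,
              by rw [Sym2.map_pair_eq, hrx, b]⟩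
          · right
            exact Finset.mem_image.mpr ⟨s(x, v2 t), hs1,
              by rw [Sym2.map_pair_eq, hrx, b]⟩
      · rw [hy] at h0; exact absurd rfl h0
    · -- y ≠ v t, rho t y = v t : class of y in W with rep = v t
      have hry' : rho v v1 v2 W (t+1) y = v1 t := by
        rw [rho_succ hES hW0 ht hym hyv, hy, if_pos rfl]
      by_cases hxv : x = v t
      · subst hxv
        rcases rho_new hES hW0 (W := W) ht with ⟨h0, _⟩ | ⟨h0, hn1, hn2⟩
        · rw [hx] at h0; exact absurd h0 hu
        · rcases es_edge_split S (x := y) (by rwa [Sym2.eq_swap] at hxy) with hs1 | hs1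
          · left
            refine Finset.mem_image.mpr ⟨s(y, v1 t), hs1, ?_⟩
            rw [Sym2.map_pair_eq, hry', hn1, hx]
            exact Sym2.eq_swap
          · left
            refine Finset.mem_image.mpr ⟨s(y, v2 t), hs1, ?_⟩
            rw [Sym2.map_pair_eq, hry', hn2, hx]
            exact Sym2.eq_swap
      · have hx1 : x ≠ v1 t := fun hh => S.hw1 (by rw [← hh]; exact hxm)
        have hx2 : x ≠ v2 t := fun hh => S.hw2 (by rw [← hh]; exact hxm)
        have hy1 : y ≠ v1 t := fun hh => S.hw1 (by rw [← hh]; exact hym)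
        have hy2 : y ≠ v2 t := fun hh => S.hw2 (by rw [← hh]; exact hym)
        have hedge : s(x,y) ∈ (q (t+1)).1.edges :=
          (S.hkeep x y hxv hyv hx1 hx2 hy1 hy2).mp hxy
        left
        refine Finset.mem_image.mpr ⟨s(x,y), hedge, ?_⟩
        rw [Sym2.map_pair_eq, rho_succ hES hW0 ht hxm hxv, hx, if_neg hu, hry']
  revert he heq
  induction e using Sym2.ind with
  | _ x y =>
    intro he heq
    rw [Sym2.map_pair_eq] at heq
    rcases Sym2.eq_iff.mp heq with ⟨h1, h2⟩ | ⟨h1, h2⟩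
    · exact CL x y he h1 h2
    · have := CL y x (by rwa [Sym2.eq_swap] at he) h2 h1
      exact this

omit hW0

include hR0mem hor hta in
lemma Lred_fwd {t : ℕ} (ht : t < n) {u w : ℕ} (hu : u ≠ v t) (hw : w ≠ v t)
    (h : s(u,w) ∈ Qred v v1 v2 n sep ta tb pu pv R0 t) :
    s(u,w) ∈ Qred v v1 v2 n sep ta tb pu pv R0 (t+1) := by
  obtain ⟨e, he, heq⟩ := Finset.mem_image.mp h
  unfold hold at heq
  refine Finset.mem_image.mpr ⟨e, he, ?_⟩
  unfold hold
  rcases Sym2.eq_iff.mp heq with ⟨h1, h2⟩ | ⟨h1, h2⟩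
  · rw [(hUU_step hES hR0mem hor hta ht he).2 (by rw [h1]; exact hu),
      (hVV_step hES hR0mem hor hta ht he).2 (by rw [h2]; exact hw), h1, h2]
  · rw [(hUU_step hES hR0mem hor hta ht he).2 (by rw [h1]; exact hw),
      (hVV_step hES hR0mem hor hta ht he).2 (by rw [h2]; exact hu), h1, h2]
    exact Sym2.eq_swap

include hR0mem hor hta in
lemma Lred_bwd {t : ℕ} (ht : t < n) {u w : ℕ}
    (hu1 : u ≠ v1 t) (hu2 : u ≠ v2 t) (hw1 : w ≠ v1 t) (hw2 : w ≠ v2 t)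
    (h : s(u,w) ∈ Qred v v1 v2 n sep ta tb pu pv R0 (t+1)) :
    s(u,w) ∈ Qred v v1 v2 n sep ta tb pu pv R0 t := by
  obtain ⟨e, he, heq⟩ := Finset.mem_image.mp h
  unfold hold at heq
  refine Finset.mem_image.mpr ⟨e, he, ?_⟩
  unfold hold
  rcases Sym2.eq_iff.mp heq with ⟨h1, h2⟩ | ⟨h1, h2⟩
  · rw [← hUU_rev hES hR0mem hor hta ht he (by rw [h1]; exact hu1) (by rw [h1]; exact hu2),
      ← hVV_rev hES hR0mem hor hta ht he (by rw [h2]; exact hw1) (by rw [h2]; exact hw2),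
      h1, h2]
  · rw [← hUU_rev hES hR0mem hor hta ht he (by rw [h1]; exact hw1) (by rw [h1]; exact hw2),
      ← hVV_rev hES hR0mem hor hta ht he (by rw [h2]; exact hu1) (by rw [h2]; exact hu2),
      h1, h2]
    exact Sym2.eq_swap

include hR0mem hR0nd hor hta in
lemma Lred_dist {t : ℕ} (ht : t < n) {u : ℕ}
    (h : s(u, v t) ∈ Qred v v1 v2 n sep ta tb pu pv R0 t) :
    s(u, v1 t) ∈ Qred v v1 v2 n sep ta tb pu pv R0 (t+1) ∨
    s(u, v2 t) ∈ Qred v v1 v2 n sep ta tb pu pv R0 (t+1) := by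
  obtain ⟨e, he, heq⟩ := Finset.mem_image.mp h
  unfold hold at heq
  have hne := hUU_ne_hVV hES hR0mem hR0nd hor hta (Nat.le_of_lt ht) he
  rcases Sym2.eq_iff.mp heq with ⟨h1, h2⟩ | ⟨h1, h2⟩
  · have huv : u ≠ v t := by
      rintro rfl
      exact hne (by rw [h1, h2])
    have hU := (hUU_step hES hR0mem hor hta ht he).2 (by rw [h1]; exact huv)
    rcases (hVV_step hES hR0mem hor hta ht he).1 h2 with hV | hV
    · left
      exact Finset.mem_image.mpr ⟨e, he, by unfold hold; rw [hU, hV, h1]⟩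
    · right
      exact Finset.mem_image.mpr ⟨e, he, by unfold hold; rw [hU, hV, h1]⟩
  · have huv : u ≠ v t := by
      rintro rfl
      exact hne (by rw [h1, h2])
    have hV := (hVV_step hES hR0mem hor hta ht he).2 (by rw [h2]; exact huv)
    rcases (hUU_step hES hR0mem hor hta ht he).1 h1 with hU | hU
    · left
      refine Finset.mem_image.mpr ⟨e, he, ?_⟩
      unfold hold
      rw [hU, hV, h2]
      exact Sym2.eq_swap
    · right
      refine Finset.mem_image.mpr ⟨e, he, ?_⟩
      unfold hold
      rw [hU, hV, h2]
      exact Sym2.eq_swap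

include hW0 in
lemma Qblue_mem' {t : ℕ} (ht : t ≤ n) :
    ∀ e' ∈ Qblue q v v1 v2 W t, ∀ z ∈ e', z ∈ (q t).1.verts := by
  intro e' he' z hz
  obtain ⟨e, he, rfl⟩ := Finset.mem_image.mp he'
  obtain ⟨y, hy, rfl⟩ := Sym2.mem_map.mp hz
  exact rho_mem hES hW0 ht ((q t).1.edges_mem _ he y hy)

include hW0 in
lemma Qblue_nd' {t : ℕ} (ht : t ≤ n) :
    ∀ e' ∈ Qblue q v v1 v2 W t, ¬ e'.IsDiag := by
  intro e' he' hd
  obtain ⟨e, he, rfl⟩ := Finset.mem_image.mp he'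
  revert he hd
  induction e using Sym2.ind with
  | _ x y =>
    intro he hd
    rw [Sym2.map_pair_eq, Sym2.mk_isDiag_iff] at hd
    have hgg : gg v v1 v2 t x = gg v v1 v2 t y := by
      rw [← rho_gg hES hW0 (W := W) ht x, ← rho_gg hES hW0 (W := W) ht y, hd]
    exact (q 0).1.edges_nd _ (trace hES t ht x y he)
      (by rw [Sym2.mk_isDiag_iff]; exact hgg)

include hR0mem hor hta in
lemma Qred_mem' {t : ℕ} (ht : t ≤ n) :
    ∀ e' ∈ Qred v v1 v2 n sep ta tb pu pv R0 t, ∀ z ∈ e', z ∈ (q t).1.verts := by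
  intro e' he' z hz
  obtain ⟨e, he, rfl⟩ := Finset.mem_image.mp he'
  unfold hold at hz
  rcases Sym2.mem_iff.mp hz with rfl | rfl
  · exact hUU_mem hES hR0mem hor hta ht he
  · exact hVV_mem hES hR0mem hor hta ht he

include hR0mem hR0nd hor hta in
lemma Qred_nd' {t : ℕ} (ht : t ≤ n) :
    ∀ e' ∈ Qred v v1 v2 n sep ta tb pu pv R0 t, ¬ e'.IsDiag := by
  intro e' he' hd
  obtain ⟨e, he, rfl⟩ := Finset.mem_image.mp he'
  unfold hold at hd
  rw [Sym2.mk_isDiag_iff] at hd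
  exact hUU_ne_hVV hES hR0mem hR0nd hor hta ht he hd

include hW0 hR0mem hR0disj hor hta in
lemma Qdisj' {t : ℕ} (ht : t ≤ n) :
    Disjoint (Qblue q v v1 v2 W t) (Qred v v1 v2 n sep ta tb pu pv R0 t) := by
  rw [Finset.disjoint_left]
  intro e' hb hr
  obtain ⟨e1, he1, heq1⟩ := Finset.mem_image.mp hb
  obtain ⟨e, he, heq2⟩ := Finset.mem_image.mp hr
  apply hR0disj e he
  have hmapr : Sym2.map (gg v v1 v2 t) e' = e := by
    rw [← heq2]
    unfold hold
    rw [Sym2.map_pair_eq]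
    exact hold_orig hES hR0mem hor hta ht he
  rw [← hmapr, ← heq1]
  revert he1
  induction e1 using Sym2.ind with
  | _ x y =>
    intro he1
    rw [Sym2.map_pair_eq, Sym2.map_pair_eq,
      rho_gg hES hW0 (W := W) ht x, rho_gg hES hW0 (W := W) ht y]
    exact trace hES t ht x y he1

include hW0 hR0mem hR0nd hor hta in
lemma step_ps {t : ℕ} (ht : t < n) (A B : ICG)
    (hA1 : A.verts = (q t).1.verts) (hA2 : A.blue = Qblue q v v1 v2 W t)
    (hA3 : A.red = Qred v v1 v2 n sep ta tb pu pv R0 t)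
    (hB1 : B.verts = (q (t+1)).1.verts) (hB2 : B.blue = Qblue q v v1 v2 W (t+1))
    (hB3 : B.red = Qred v v1 v2 n sep ta tb pu pv R0 (t+1)) :
    PS A B (v t) (v1 t) (v2 t) := by
  have S := hES t ht
  constructor
  case hv => rw [hA1]; exact S.hv
  case h1 => rw [hA1]; exact S.hw1
  case h2 => rw [hA1]; exact S.hw2
  case h12 => exact S.h12
  case hverts => rw [hB1, hA1]; exact S.hverts
  case hkeep =>
    intro u w huv hwv hu1 hu2 hw1 hw2
    constructor
    · rw [hA2, hB2]
      exact ⟨Lblue_fwd hES hW0 ht huv hwv, Lblue_bwd hES hW0 ht hu1 hu2 hw1 hw2⟩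
    · rw [hA3, hB3]
      exact ⟨Lred_fwd hES hR0mem hor hta ht huv hwv,
        Lred_bwd hES hR0mem hor hta ht hu1 hu2 hw1 hw2⟩
  case hblue =>
    intro u h
    rw [hA2] at h
    rw [hB2]
    have hu : u ≠ v t := by
      rintro rfl
      exact Qblue_nd' hES hW0 (Nat.le_of_lt ht) _ h (by simp)
    exact Lblue_split hES hW0 ht hu h
  case hred =>
    intro u h
    rw [hA3] at h
    rw [hB3]
    exact Lred_dist hES hR0mem hR0nd hor hta ht h

omit hR0mem hR0nd hor hta hW0

include hVU in
lemma shed_div {z : ℕ} (hz0 : z ∈ (q 0).1.verts) (hzn : z ∉ (q n).1.verts) :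
    tk v v2 n z ≠ rp v v1 n z := by
  obtain ⟨t0, ht0, hzt, hzv⟩ : ∃ t0 < n, z ∈ (q t0).1.verts ∧ z = v t0 := by
    obtain ⟨t0, ht0, h1, h2⟩ := flip_time (P := fun t => z ∈ (q t).1.verts) n hz0 hzn
    refine ⟨t0, ht0, h1, ?_⟩
    by_contra hzv
    exact h2 ((es_vmem (hES t0 ht0) z).mpr (Or.inr (Or.inr ⟨h1, hzv⟩)))
  have hnosplit : ∀ s < t0, v s ≠ z := by
    intro s hs hvz
    have S := hES s (by omega)
    apply noreturn hES hVU s (by omega) z (by rw [← hvz]; exact S.hv)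
      (by rw [← hvz]; exact es_vt_not S) t0 (by omega) (by omega) hzt
  have step1 : ∀ s ≤ t0, tk v v2 s z = z ∧ rp v v1 s z = z := by
    intro s
    induction s with
    | zero => intro _; exact ⟨rfl, rfl⟩
    | succ s IH =>
        intro hs
        obtain ⟨h1, h2⟩ := IH (by omega)
        have hvs : v s ≠ z := hnosplit s (by omega)
        constructor
        · simp only [tk, h1]
          rw [if_neg (fun hc => hvs hc.symm)]
        · simp only [rp, h2]
          rw [if_neg (fun hc => hvs hc.symm)]
  have hT : tk v v2 (t0+1) z = v2 t0 := by
    simp only [tk, (step1 t0 le_rfl).1]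
    rw [if_pos hzv.symm.symm]
  have hR : rp v v1 (t0+1) z = v1 t0 := by
    simp only [rp, (step1 t0 le_rfl).2]
    rw [if_pos hzv.symm.symm]
  have key : ∀ m, t0+1+m ≤ n → tk v v2 (t0+1+m) z ≠ rp v v1 (t0+1+m) z := by
    intro m
    induction m with
    | zero =>
        intro _
        rw [show t0+1+0 = t0+1 from rfl, hT, hR]
        exact Ne.symm (hES t0 ht0).h12
    | succ m IH =>
        intro h
        have hs : t0+1+m < n := by omega
        have S := hES (t0+1+m) hs
        have IH' := IH (by omega)
        have htk := (tk_mem hES (t0+1+m) (by omega) z hz0).1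
        have hrp := (rp_mem hES (t0+1+m) (by omega) z hz0).1
        rw [show t0+1+(m+1) = (t0+1+m)+1 from by omega]
        by_cases hc : tk v v2 (t0+1+m) z = v (t0+1+m)
        · have e1 : tk v v2 ((t0+1+m)+1) z = v2 (t0+1+m) := by
            simp only [tk]; rw [if_pos hc]
          have e2 : rp v v1 ((t0+1+m)+1) z = rp v v1 (t0+1+m) z := by
            simp only [rp]
            rw [if_neg (fun hh => IH' (hc.trans hh.symm))]
          rw [e1, e2]
          intro hh
          rw [← hh] at hrp
          exact S.hw2 hrp
        · by_cases hc2 : rp v v1 (t0+1+m) z = v (t0+1+m)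
          · have e1 : tk v v2 ((t0+1+m)+1) z = tk v v2 (t0+1+m) z := by
              simp only [tk]; rw [if_neg hc]
            have e2 : rp v v1 ((t0+1+m)+1) z = v1 (t0+1+m) := by
              simp only [rp]; rw [if_pos hc2]
            rw [e1, e2]
            intro hh
            rw [hh] at htk
            exact S.hw1 htk
          · have e1 : tk v v2 ((t0+1+m)+1) z = tk v v2 (t0+1+m) z := by
              simp only [tk]; rw [if_neg hc]
            have e2 : rp v v1 ((t0+1+m)+1) z = rp v v1 (t0+1+m) z := by
              simp only [rp]; rw [if_neg hc2]
            rw [e1, e2]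
            exact IH'
  have hfin := key (n - (t0+1)) (by omega)
  rwa [show t0+1+(n-(t0+1)) = n from by omega] at hfin

include hVU hR0mem hR0nd hR0disj hor hta hshed hW0 hWcoh in
lemma noerr (A : ICG) (hA1 : A.verts = (q n).1.verts)
    (hA2 : A.blue = Qblue q v v1 v2 W n)
    (hA3 : A.red = Qred v v1 v2 n sep ta tb pu pv R0 n) :
    ¬ HasErrCycle A := by
  rintro ⟨l, a, b, hlnd, hch, hh, hl, hred⟩
  rw [hA3] at hred
  rw [hA2] at hch
  have hrtg : Relation.ReflTransGen (fun x y => s(x,y) ∈ Qblue q v v1 v2 W n) a b :=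
    chain_rtg l a b hch hh hl
  have hsym : ∀ {x y : ℕ},
      Relation.ReflTransGen (fun x y => s(x,y) ∈ Qblue q v v1 v2 W n) x y →
      Relation.ReflTransGen (fun x y => s(x,y) ∈ Qblue q v v1 v2 W n) y x := by
    intro x y hxy
    letI : Std.Symm (fun x y => s(x,y) ∈ Qblue q v v1 v2 W n) :=
      ⟨fun c d (hcd : s(c,d) ∈ _) => by rwa [Sym2.eq_swap] at hcd⟩
    exact Std.Symm.symm _ _ hxy
  have hsymF : ∀ {x y : ℕ},
      Relation.ReflTransGen (fun c d => s(c,d) ∈ (q n).1.edges) x y →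
      Relation.ReflTransGen (fun c d => s(c,d) ∈ (q n).1.edges) y x := by
    intro x y hxy
    letI : Std.Symm (fun c d => s(c,d) ∈ (q n).1.edges) :=
      ⟨fun c d (hcd : s(c,d) ∈ _) => by rwa [Sym2.eq_swap] at hcd⟩
    exact Std.Symm.symm _ _ hxy
  obtain ⟨e, he, heq⟩ := Finset.mem_image.mp hred
  have hne : a ≠ b := by
    rintro rfl
    apply hUU_ne_hVV hES hR0mem hR0nd hor hta le_rfl he
    unfold hold at heq
    rcases Sym2.eq_iff.mp heq with ⟨h1, h2⟩ | ⟨h1, h2⟩ <;> rw [h1, h2]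
  have hiso_imp : ∀ z, (∀ e' ∈ Qblue q v v1 v2 W n, z ∉ e') →
      ∀ c, Relation.ReflTransGen (fun x y => s(x,y) ∈ Qblue q v v1 v2 W n) z c →
      c = z := by
    intro z hz c hzc
    rcases Relation.ReflTransGen.cases_head hzc with rfl | ⟨d, hzd, _⟩
    · rfl
    · exact absurd (show z ∈ s(z,d) by simp) (hz _ hzd)
  have hISO : ∀ z, z ∈ (q n).1.verts → gg v v1 v2 n z ∈ W →
      z ≠ rp v v1 n (gg v v1 v2 n z) → ∀ e' ∈ Qblue q v v1 v2 W n, z ∉ e' := by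
    intro z hz hzW hzrp e' he' hze
    obtain ⟨e1, he1, rfl⟩ := Finset.mem_image.mp he'
    obtain ⟨y, hy, hyz⟩ := Sym2.mem_map.mp hze
    unfold rho at hyz
    by_cases hc : gg v v1 v2 n y ∈ W
    · rw [if_pos hc] at hyz
      have hgz : gg v v1 v2 n z = gg v v1 v2 n y := by
        rw [← hyz]
        exact (rp_mem hES n le_rfl _ (hW0 _ hc)).2
      exact hzrp (by rw [hgz, hyz])
    · rw [if_neg hc] at hyz
      rw [← hyz] at hzW
      exact hc hzW
  have hCOH : ∀ x y, x ∈ (q n).1.verts → y ∈ (q n).1.verts →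
      rho v v1 v2 W n x = rho v v1 v2 W n y →
      Relation.ReflTransGen (fun c d => s(c,d) ∈ (q n).1.edges) x y := by
    intro x y hx hy hxy
    unfold rho at hxy
    by_cases hcx : gg v v1 v2 n x ∈ W <;> by_cases hcy : gg v v1 v2 n y ∈ W
    · rw [if_pos hcx, if_pos hcy] at hxy
      have hcc : gg v v1 v2 n x = gg v v1 v2 n y := by
        rw [← (rp_mem hES n le_rfl _ (hW0 _ hcx)).2, ← (rp_mem hES n le_rfl _ (hW0 _ hcy)).2,
          hxy]
      exact hWcoh _ hcx x y hx hy rfl hcc.symm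
    · rw [if_pos hcx, if_neg hcy] at hxy
      exfalso
      apply hcy
      rw [← hxy, (rp_mem hES n le_rfl _ (hW0 _ hcx)).2]
      exact hcx
    · rw [if_neg hcx, if_pos hcy] at hxy
      exfalso
      apply hcx
      rw [hxy, (rp_mem hES n le_rfl _ (hW0 _ hcy)).2]
      exact hcy
    · rw [if_neg hcx, if_neg hcy] at hxy
      subst hxy
      exact Relation.ReflTransGen.refl
  have hLIFT : ∀ c d, Relation.ReflTransGen (fun x y => s(x,y) ∈ Qblue q v v1 v2 W n) c d →
      ∀ x, x ∈ (q n).1.verts → rho v v1 v2 W n x = c →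
      ∀ y, y ∈ (q n).1.verts → rho v v1 v2 W n y = d →
      Relation.ReflTransGen (fun c d => s(c,d) ∈ (q n).1.edges) x y := by
    intro c d hcd
    induction hcd with
    | refl =>
        intro x hx hxc y hy hyd
        exact hCOH x y hx hy (by rw [hxc, hyd])
    | @tail m d' hcm hmd IH =>
        intro x hx hxc y hy hyd
        obtain ⟨e1, he1, heq1⟩ := Finset.mem_image.mp hmd
        revert heq1
        induction e1 using Sym2.ind with
        | _ c1 d1 =>
          intro heq1
          rw [Sym2.map_pair_eq] at heq1
          have hc1 : c1 ∈ (q n).1.verts := (q n).1.edges_mem _ he1 _ (by simp)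
          have hd1 : d1 ∈ (q n).1.verts := (q n).1.edges_mem _ he1 _ (by simp)
          rcases Sym2.eq_iff.mp heq1 with ⟨h1, h2⟩ | ⟨h1, h2⟩
          · have r1 := IH x hx hxc c1 hc1 h1
            have r3 := hCOH d1 y hd1 hy (by rw [h2, hyd])
            exact (r1.trans (Relation.ReflTransGen.single he1)).trans r3
          · have r1 := IH x hx hxc d1 hd1 h2
            have r3 := hCOH c1 y hc1 hy (by rw [h1, hyd])
            exact (r1.trans (Relation.ReflTransGen.single
              (by rwa [Sym2.eq_swap] at he1))).trans r3
  unfold hold at heq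
  by_cases hs : sep e
  · have hta' := hta e he hs
    have hU : hUU v v1 v2 n sep ta pu n e = ta e := by
      simp only [hUU, if_pos hs]
      exact back_nn _
    have hV : hVV v v1 v2 n sep tb pv n e = tb e := by
      simp only [hVV, if_pos hs]
      exact back_nn _
    rw [hU, hV] at heq
    have hzfix : ∀ z, z ∈ (q n).1.verts →
        (∀ e' ∈ Qblue q v v1 v2 W n, z ∉ e') ∨ rho v v1 v2 W n z = z := by
      intro z hz
      by_cases hc : gg v v1 v2 n z ∈ W
      · by_cases hr : z = rp v v1 n (gg v v1 v2 n z)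
        · right
          unfold rho
          rw [if_pos hc, ← hr]
        · left
          exact hISO z hz hc hr
      · right
        unfold rho
        rw [if_neg hc]
    have hAB : (a = ta e ∧ b = tb e) ∨ (a = tb e ∧ b = ta e) := by
      rcases Sym2.eq_iff.mp heq with ⟨h1, h2⟩ | ⟨h1, h2⟩
      · exact Or.inl ⟨h1.symm, h2.symm⟩
      · exact Or.inr ⟨h2.symm, h1.symm⟩
    rcases hzfix (ta e) hta'.1 with hisoA | hfixA
    · rcases hAB with ⟨h1, h2⟩ | ⟨h1, h2⟩
      · exact hne (h1.trans (hiso_imp _ hisoA b (by rwa [h1] at hrtg)).symm)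
      · exact hne ((hiso_imp _ hisoA a (by rw [← h2]; exact hsym hrtg)).trans h2.symm)
    · rcases hzfix (tb e) hta'.2.1 with hisoB | hfixB
      · rcases hAB with ⟨h1, h2⟩ | ⟨h1, h2⟩
        · exact hne ((hiso_imp _ hisoB a (by rw [← h2]; exact hsym hrtg)).trans h2.symm)
        · exact hne (h1.trans (hiso_imp _ hisoB b (by rwa [h1] at hrtg)).symm)
      · apply hta'.2.2.2
        rcases hAB with ⟨h1, h2⟩ | ⟨h1, h2⟩
        · exact hLIFT a b hrtg (ta e) hta'.1 (by rw [hfixA, h1]) (tb e) hta'.2.1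
            (by rw [hfixB, h2])
        · exact hsymF (hLIFT a b hrtg (tb e) hta'.2.1 (by rw [hfixB, h1]) (ta e) hta'.1
            (by rw [hfixA, h2]))
  · have hz := hshed e he hs
    have hzval : hVV v v1 v2 n sep tb pv n e = tk v v2 n (pv e) := by
      simp only [hVV, if_neg hs]
    have hzmem : hVV v v1 v2 n sep tb pv n e ∈ (q n).1.verts :=
      hVV_mem hES hR0mem hor hta le_rfl he
    have hggz : gg v v1 v2 n (hVV v v1 v2 n sep tb pv n e) = pv e := by
      rw [hzval]
      exact (tk_mem hES n le_rfl _ (pu_mem0 hR0mem hor he).2).2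
    have hdiv : hVV v v1 v2 n sep tb pv n e ≠ rp v v1 n (pv e) := by
      rw [hzval]
      exact shed_div hES hVU (pu_mem0 hR0mem hor he).2 hz.2
    have hisoZ : ∀ e' ∈ Qblue q v v1 v2 W n, hVV v v1 v2 n sep tb pv n e ∉ e' :=
      hISO _ hzmem (by rw [hggz]; exact hz.1) (by rw [hggz]; exact hdiv)
    rcases Sym2.eq_iff.mp heq with ⟨h1, h2⟩ | ⟨h1, h2⟩
    · exact hne ((hiso_imp _ hisoZ a (by rw [h2]; exact hsym hrtg)).trans h2)
    · exact hne (h2.symm.trans (hiso_imp _ hisoZ b (by rw [h2]; exact hrtg)).symm)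

end Lemmas

end Backward2



lemma backward_main (G : ICG) (k : ℕ) (H : SG)
    (hv : H.verts = G.verts) (he : H.edges = G.blue)
    (hmc : MCSolution H G.red k) :
    ∃ n ≤ k, ∃ G', Splits n G G' ∧ ¬ HasErrCycle G' := by
  classical
  obtain ⟨n, q, hn, hq0, hsteps, hfin⟩ := hmc
  have hWit : ∀ i, ∃ a b c, i < n → ES (q i) (q (i+1)) a b c := by
    intro i
    by_cases hi : i < n
    · obtain ⟨a, b, c, hp⟩ := exclStep_iff.mp (hsteps i hi)
      exact ⟨a, b, c, fun _ => hp⟩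
    · exact ⟨0, 0, 0, fun h' => absurd h' hi⟩
  choose va vb vc hES0 using hWit
  have hES : ∀ i < n, ES (q i) (q (i+1)) (va i) (vb i) (vc i) := fun i hi => hES0 i hi
  have hVU : (q 0).1.verts ⊆ (q 0).2 := by rw [hq0]
  have hv0 : (q 0).1.verts = G.verts := by rw [hq0]; exact hv
  have he0 : (q 0).1.edges = G.blue := by rw [hq0]; exact he
  set Sep : Sym2 ℕ → Prop := fun e => ∃ a b, a ∈ (q n).1.verts ∧ b ∈ (q n).1.verts ∧
    s(gg va vb vc n a, gg va vb vc n b) = e ∧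
    ¬ Relation.ReflTransGen (fun x y => s(x,y) ∈ (q n).1.edges) a b with hSep
  have hTrg : ∀ e, ∃ ab : ℕ × ℕ, Sep e → (ab.1 ∈ (q n).1.verts ∧ ab.2 ∈ (q n).1.verts ∧
      s(gg va vb vc n ab.1, gg va vb vc n ab.2) = e ∧
      ¬ Relation.ReflTransGen (fun x y => s(x,y) ∈ (q n).1.edges) ab.1 ab.2) := by
    intro e
    by_cases h : Sep e
    · obtain ⟨a, b, h1, h2, h3, h4⟩ := h
      exact ⟨(a,b), fun _ => ⟨h1, h2, h3, h4⟩⟩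
    · exact ⟨(0,0), fun h' => absurd h' h⟩
  choose tab htab using hTrg
  have hPd : ∀ e, ∃ cd : ℕ × ℕ, e ∈ G.red →
      (s(cd.1, cd.2) = e ∧ (¬ Sep e → cd.2 ∉ (q n).1.verts)) := by
    intro e
    by_cases hre : e ∈ G.red
    · revert hre
      induction e using Sym2.ind with
      | _ c d =>
        intro hre
        by_cases hs : Sep s(c, d)
        · exact ⟨(c, d), fun _ => ⟨rfl, fun hns => absurd hs hns⟩⟩
        · by_cases hdn : d ∈ (q n).1.verts
          · refine ⟨(d, c), fun _ => ⟨Sym2.eq_swap, fun _ hcn => ?_⟩⟩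
            apply hs
            have hc0 : c ∈ (q 0).1.verts := by
              rw [hv0]; exact G.red_mem _ hre c (by simp)
            have hd0 : d ∈ (q 0).1.verts := by
              rw [hv0]; exact G.red_mem _ hre d (by simp)
            refine ⟨c, d, hcn, hdn, ?_, ?_⟩
            · rw [orig_fix hES hVU n le_rfl c hc0 hcn,
                orig_fix hES hVU n le_rfl d hd0 hdn]
            · exact hfin _ hre c d rfl hcn hdn
          · exact ⟨(c, d), fun _ => ⟨rfl, fun _ => hdn⟩⟩
    · exact ⟨(0,0), fun h => absurd h hre⟩
  choose pd hpd using hPd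
  set pu : Sym2 ℕ → ℕ := fun e => (pd e).1 with hpudef
  set pv : Sym2 ℕ → ℕ := fun e => (pd e).2 with hpvdef
  set ta : Sym2 ℕ → ℕ := fun e => (tab e).1 with htadef
  set tb : Sym2 ℕ → ℕ := fun e => (tab e).2 with htbdef
  set W : Finset ℕ := (G.red.filter (fun e => ¬ Sep e)).image pv with hWdef
  have hR0mem : ∀ e ∈ G.red, ∀ x ∈ e, x ∈ (q 0).1.verts := by
    intro e he' x hx
    rw [hv0]
    exact G.red_mem e he' x hx
  have hR0nd : ∀ e ∈ G.red, ¬ e.IsDiag := G.red_nd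
  have hR0disj : ∀ e ∈ G.red, e ∉ (q 0).1.edges := by
    intro e he'
    rw [he0]
    exact Finset.disjoint_right.mp G.disj he'
  have hor : ∀ e ∈ G.red, s(pu e, pv e) = e := fun e he' => (hpd e he').1
  have hta : ∀ e ∈ G.red, Sep e → ta e ∈ (q n).1.verts ∧ tb e ∈ (q n).1.verts ∧
      s(gg va vb vc n (ta e), gg va vb vc n (tb e)) = e ∧
      ¬ Relation.ReflTransGen (fun x y => s(x,y) ∈ (q n).1.edges) (ta e) (tb e) :=
    fun e _ hs => htab e hs
  have hshed : ∀ e ∈ G.red, ¬ Sep e → pv e ∈ W ∧ pv e ∉ (q n).1.verts := by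
    intro e he' hns
    exact ⟨Finset.mem_image.mpr ⟨e, Finset.mem_filter.mpr ⟨he', hns⟩, rfl⟩,
      (hpd e he').2 hns⟩
  have hW0 : ∀ w ∈ W, w ∈ (q 0).1.verts := by
    intro w hw
    obtain ⟨e, hef, rfl⟩ := Finset.mem_image.mp hw
    exact (pu_mem0 hR0mem hor (Finset.mem_filter.mp hef).1).2
  have hsymF : ∀ {x y : ℕ},
      Relation.ReflTransGen (fun c d => s(c,d) ∈ (q n).1.edges) x y →
      Relation.ReflTransGen (fun c d => s(c,d) ∈ (q n).1.edges) y x := by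
    intro x y hxy
    letI : Std.Symm (fun c d => s(c,d) ∈ (q n).1.edges) :=
      ⟨fun c d (hcd : s(c,d) ∈ _) => by rwa [Sym2.eq_swap] at hcd⟩
    exact Std.Symm.symm _ _ hxy
  have hWcoh : ∀ w ∈ W, ∀ x y, x ∈ (q n).1.verts → y ∈ (q n).1.verts →
      gg va vb vc n x = w → gg va vb vc n y = w →
      Relation.ReflTransGen (fun x y => s(x,y) ∈ (q n).1.edges) x y := by
    intro w hw x y hx hy hgx hgy
    obtain ⟨e0, hef, rfl⟩ := Finset.mem_image.mp hw
    obtain ⟨he0', hns⟩ := Finset.mem_filter.mp hef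
    have hpum := pu_mem0 hR0mem hor he0'
    obtain ⟨a0, ha0, hga0⟩ := desc_ne hES n le_rfl (pu e0) hpum.1
    have hSepNeg : ∀ a b, a ∈ (q n).1.verts → b ∈ (q n).1.verts →
        s(gg va vb vc n a, gg va vb vc n b) = e0 →
        Relation.ReflTransGen (fun x y => s(x,y) ∈ (q n).1.edges) a b := by
      intro a b h1 h2 h3
      by_contra h4
      exact hns ⟨a, b, h1, h2, h3, h4⟩
    have r1 := hSepNeg a0 x ha0 hx (by rw [hga0, hgx]; exact hor e0 he0')
    have r2 := hSepNeg a0 y ha0 hy (by rw [hga0, hgy]; exact hor e0 he0')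
    exact (hsymF r1).trans r2
  -- the ICG sequence
  have hBmem := fun (t : ℕ) (ht : t ≤ n) => Qblue_mem' hES hW0 (W := W) ht
  have hBnd := fun (t : ℕ) (ht : t ≤ n) => Qblue_nd' hES hW0 (W := W) ht
  have hRmem := fun (t : ℕ) (ht : t ≤ n) =>
    Qred_mem' hES hR0mem hor hta (sep := Sep) ht
  have hRnd := fun (t : ℕ) (ht : t ≤ n) =>
    Qred_nd' hES hR0mem hR0nd hor hta (sep := Sep) ht
  have hDj := fun (t : ℕ) (ht : t ≤ n) =>
    Qdisj' hES hR0mem hR0disj hor hta hW0 ht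
  set fIC : ℕ → ICG := fun t => if h : t ≤ n then
    ⟨(q t).1.verts, Qblue q va vb vc W t, Qred va vb vc n Sep ta tb pu pv G.red t,
      hBmem t h, hRmem t h, hBnd t h, hRnd t h, hDj t h⟩ else G with hfIC
  refine ⟨n, hn, fIC n, ⟨fIC, ?_, rfl, ?_⟩, ?_⟩
  · -- fIC 0 = G
    rw [hfIC]
    simp only [dif_pos (Nat.zero_le n)]
    apply ICG.ext'
    · exact hv0
    · show Qblue q va vb vc W 0 = G.blue
      have hrho : rho va vb vc W 0 = id := by
        funext x
        simp [rho, gg, rp]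
        exact ite_self _
      unfold Qblue
      rw [hrho, Sym2.map_id, Finset.image_id]
      exact he0
    · show Qred va vb vc n Sep ta tb pu pv G.red 0 = G.red
      unfold Qred
      rw [Finset.image_congr (g := id) ?_, Finset.image_id]
      intro e he'
      simp only [id]
      unfold hold
      by_cases hs : Sep e
      · have h1 : hUU va vb vc n Sep ta pu 0 e = gg va vb vc n (ta e) := by
          simp only [hUU, if_pos hs]
          exact (back_mem' hES (Nat.zero_le n) (hta e he' hs).1).2
        have h2 : hVV va vb vc n Sep tb pv 0 e = gg va vb vc n (tb e) := by
          simp only [hVV, if_pos hs]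
          exact (back_mem' hES (Nat.zero_le n) (hta e he' hs).2.1).2
        rw [h1, h2]
        exact (hta e he' hs).2.2.1
      · have h1 : hUU va vb vc n Sep ta pu 0 e = pu e := by simp only [hUU, if_neg hs]; rfl
        have h2 : hVV va vb vc n Sep tb pv 0 e = pv e := by simp only [hVV, if_neg hs]; rfl
        rw [h1, h2]
        exact hor e he'
  · -- steps
    intro i hi
    rw [hfIC]
    simp only [dif_pos (show i ≤ n by omega), dif_pos (show i+1 ≤ n by omega)]
    exact permSplit_iff.mpr ⟨va i, vb i, vc i,
      step_ps hES hR0mem hR0nd hor hta hW0 hi _ _ rfl rfl rfl rfl rfl rfl⟩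
  · -- no err cycle
    rw [hfIC]
    simp only [dif_pos (le_refl n)]
    exact noerr hES hVU hR0mem hR0nd hR0disj hor hta hshed hW0 hWcoh _ rfl rfl rfl

theorem stmt2 (G : ICG) (k : ℕ) (H : SG)
    (hv : H.verts = G.verts) (he : H.edges = G.blue) :
    (∃ n ≤ k, ∃ G', Splits n G G' ∧ ¬ HasErrCycle G') ↔ MCSolution H G.red k :=
  ⟨fun h => forward_main G k H hv he h, fun h => backward_main G k H hv he h⟩
end
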